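/- arXiv:1001.2504 — 7 statements merged into one kernel-verified Lean document; each statement's English description precedes it below -/
import Mathlib

section
/- In GL_{n+1}(F_2), with x_j = I + E_{j+1,j} and y_j = I + E_{j,j+1}, one has (x_j x_{j+1} y_j)^3 = I for all 1 ≤ j ≤ n-1. -/
open Matrix


/-- The transvection `x_{j+1} = I + E_{j+2,j+1}` (1-based: `x_j = I + E_{j+1,j}`). -/
def xM (n : ℕ) (j : Fin n) : Matrix (Fin (n + 1)) (Fin (n + 1)) (ZMod 2) :=
  1 + Matrix.single j.succ j.castSucc 1

/-- The transvection `y_{j+1} = I + E_{j+1,j+2}` (1-based: `y_j = I + E_{j,j+1}`). -/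
def yM (n : ℕ) (j : Fin n) : Matrix (Fin (n + 1)) (Fin (n + 1)) (ZMod 2) :=
  1 + Matrix.single j.castSucc j.succ 1

lemma key {m : Type*} [Fintype m] [DecidableEq m] (a b c : m)
    (hab : a ≠ b) (hbc : b ≠ c) (hac : a ≠ c) :
    ((1 + Matrix.single b a (1 : ZMod 2)) * (1 + Matrix.single c b 1) *
      (1 + Matrix.single a b 1)) ^ 3 = 1 := by
  have hba := hab.symm
  have hcb := hbc.symm
  have hca := hac.symm
  have htwo : ∀ A : Matrix m m (ZMod 2), A + A = 0 := fun A => by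
    ext i j; exact CharTwo.add_self_eq_zero _
  set S : Matrix m m (ZMod 2) :=
    Matrix.single a b 1 + Matrix.single b a 1 + Matrix.single b b 1 +
      Matrix.single c b 1 with hS
  have hM : (1 + Matrix.single b a (1 : ZMod 2)) * (1 + Matrix.single c b 1) *
      (1 + Matrix.single a b 1) = 1 + S := by
    rw [hS]
    simp only [mul_add, add_mul, mul_one, one_mul,
      Matrix.single_mul_single_same, Matrix.single_mul_single_of_ne,
      hab, hbc, hac, hba, hcb, hca, ne_eq, not_false_iff,
      add_zero, zero_add, zero_mul, mul_zero, mul_one]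
    abel
  have hS2 : S * S = Matrix.single a a 1 + Matrix.single a b 1 + Matrix.single b a 1 +
      Matrix.single c a 1 + Matrix.single c b 1 := by
    rw [hS]
    simp only [mul_add, add_mul, mul_one, one_mul,
      Matrix.single_mul_single_same, Matrix.single_mul_single_of_ne,
      hab, hbc, hac, hba, hcb, hca, ne_eq, not_false_iff,
      add_zero, zero_add, zero_mul, mul_zero, mul_one]
    abel_nf
    simp only [smul_add, two_smul, htwo, zero_add, add_zero]
  have hS3 : S * S * S = S + S * S := by
    conv_lhs => rw [hS2, hS]
    simp only [mul_add, add_mul, mul_one, one_mul,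
      Matrix.single_mul_single_same, Matrix.single_mul_single_of_ne,
      hab, hbc, hac, hba, hcb, hca, ne_eq, not_false_iff,
      add_zero, zero_add, zero_mul, mul_zero, mul_one]
    rw [hS2, hS]
    abel_nf
    simp only [smul_add, two_smul, htwo, zero_add, add_zero]
  rw [hM]
  have expand : (1 + S) ^ 3 =
      1 + (S + S) + S + (S*S + S*S) + S*S + S*S*S := by noncomm_ring
  rw [expand, hS3, htwo S, htwo (S*S)]
  abel_nf
  simp only [smul_add, two_smul, htwo, zero_add, add_zero]

theorem stmt6 (n : ℕ) (j k : Fin n) (hk : (k : ℕ) = (j : ℕ) + 1) :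
    (xM n j * xM n k * yM n j) ^ 3 = 1 := by
  have hbk : j.succ = k.castSucc := by
    apply Fin.ext
    simp [hk]
  have hab : j.castSucc ≠ j.succ := (Fin.castSucc_lt_succ (i := j)).ne
  have hbc : j.succ ≠ k.succ := by
    rw [hbk]; exact (Fin.castSucc_lt_succ (i := k)).ne
  have hac : j.castSucc ≠ k.succ := by
    apply Fin.ne_of_lt
    exact (Fin.castSucc_lt_succ (i := j)).trans (hbk ▸ Fin.castSucc_lt_succ (i := k))
  have := key j.castSucc j.succ k.succ hab hbc hac
  simpa [xM, yM, hbk] using this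
end

section
/- Let λ = (λ_1,...,λ_l) and μ = (μ_1,...,μ_m) be compositions of n with μ_m ≤ λ_l. Then |P_{λ|μ}| = 2^{μ_m(λ_l - μ_m)} · |GL_{μ_m}(F_2)| · |P_{λ̃|μ̃}|, where λ̃ = (λ_1,...,λ_{l-1}, λ_l - μ_m) and μ̃ = (μ_1,...,μ_{m-1}), and P_{λ|μ} = P_λ ∩ (P_μ)^t is the intersection of the standard (upper-block-triangular) parabolic subgroup P_λ of GL_n(F_2) with the transpose of P_μ. -/
open Matrix

open Matrix

/-- Index of the block (w.r.t. the composition `l`) containing row/column `i`. -/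
def blockIdx (l : List ℕ) (i : ℕ) : ℕ :=
  (List.range l.length).countP (fun k => (l.take (k + 1)).sum ≤ i)

/-- The submonoid of `GL n (F₂)` of matrices that are block upper triangular w.r.t. `l`
and block lower triangular w.r.t. `m`. -/
def paraPairM (n : ℕ) (l m : List ℕ) : Submonoid (GL (Fin n) (ZMod 2)) where
  carrier := {g | (∀ i j : Fin n, blockIdx l j < blockIdx l i →
      (g : Matrix (Fin n) (Fin n) (ZMod 2)) i j = 0) ∧
    (∀ i j : Fin n, blockIdx m i < blockIdx m j →
      (g : Matrix (Fin n) (Fin n) (ZMod 2)) i j = 0)}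
  one_mem' := by
    constructor <;> intro i j h <;>
    · have : i ≠ j := by rintro rfl; omega
      simp [Matrix.one_apply_ne this]
  mul_mem' := by
    rintro a b ⟨ha1, ha2⟩ ⟨hb1, hb2⟩
    constructor
    · intro i j h
      show ((a : Matrix (Fin n) (Fin n) (ZMod 2)) * b) i j = 0
      rw [Matrix.mul_apply]
      apply Finset.sum_eq_zero
      intro k _
      rcases lt_or_ge (blockIdx l k) (blockIdx l i) with hk | hk
      · rw [ha1 i k hk, zero_mul]
      · rw [hb1 k j (lt_of_lt_of_le h hk), mul_zero]
    · intro i j h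
      show ((a : Matrix (Fin n) (Fin n) (ZMod 2)) * b) i j = 0
      rw [Matrix.mul_apply]
      apply Finset.sum_eq_zero
      intro k _
      rcases lt_or_ge (blockIdx m i) (blockIdx m k) with hk | hk
      · rw [ha2 i k hk, zero_mul]
      · rw [hb2 k j (lt_of_le_of_lt hk h), mul_zero]

/-- `P_{λ|μ} = P_λ ∩ (P_μ)ᵗ` as a subgroup of `GL n (F₂)`. -/
def paraPair (n : ℕ) (l m : List ℕ) : Subgroup (GL (Fin n) (ZMod 2)) where
  toSubmonoid := paraPairM n l m
  inv_mem' := by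
    intro g hg
    have hord : g ^ orderOf g = 1 := pow_orderOf_eq_one g
    have hpos : 0 < orderOf g := orderOf_pos g
    have hinv : g⁻¹ = g ^ (orderOf g - 1) := by
      apply inv_eq_of_mul_eq_one_right
      rw [← pow_succ']
      have h1 : orderOf g - 1 + 1 = orderOf g := by omega
      rw [h1, hord]
    rw [hinv]
    exact Submonoid.pow_mem _ hg _

/-- The standard parabolic subgroup `P_λ` of `GL n (F₂)`. -/
def para (n : ℕ) (l : List ℕ) : Subgroup (GL (Fin n) (ZMod 2)) := paraPair n l []

/-- The stopover set of a composition. -/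
def stopovers (l : List ℕ) : Set ℕ :=
  {s | ∃ t, 0 < t ∧ t < l.length ∧ (l.take t).sum = s}

section AuxStmt10

lemma blockIdx_append (l : List ℕ) (x i : ℕ) (hi : i < l.sum + x) :
    blockIdx (l ++ [x]) i = blockIdx l i := by
  unfold blockIdx
  rw [List.length_append, List.length_singleton, List.range_succ, List.countP_append]
  have h1 : (List.range l.length).countP (fun k => decide (((l ++ [x]).take (k + 1)).sum ≤ i))
      = (List.range l.length).countP (fun k => decide ((l.take (k + 1)).sum ≤ i)) := by
    apply List.countP_congr
    intro k hk
    rw [List.mem_range] at hk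
    simp only [decide_eq_true_eq]
    rw [List.take_append_of_le_length (by omega)]
  rw [h1]
  have h2 : (decide (((l ++ [x]).take (l.length + 1)).sum ≤ i)) = false := by
    rw [List.take_of_length_le (by simp)]
    simp only [List.sum_append, List.sum_cons, List.sum_nil, decide_eq_false_iff_not]
    omega
  simp [List.countP_singleton, h2]
  all_goals omega

lemma blockIdx_of_sum_le (l : List ℕ) (i : ℕ) (hi : l.sum ≤ i) :
    blockIdx l i = l.length := by
  have h : (List.range l.length).countP (fun k => decide ((l.take (k + 1)).sum ≤ i))
      = (List.range l.length).length := by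
    apply List.countP_eq_length.mpr
    intro k hk
    simp only [decide_eq_true_eq]
    calc (l.take (k+1)).sum ≤ l.sum := List.Sublist.sum_le_sum (List.take_sublist _ _) (by simp)
      _ ≤ i := hi
  rw [blockIdx, h, List.length_range]

lemma blockIdx_lt_length (l : List ℕ) (i : ℕ) (hi : i < l.sum) :
    blockIdx l i < l.length := by
  have hne : l ≠ [] := by rintro rfl; simp at hi
  have hlen : 0 < l.length := List.length_pos_iff.mpr hne
  have hle : blockIdx l i ≤ l.length := by
    have := List.countP_le_length (p := fun k => decide ((l.take (k + 1)).sum ≤ i))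
      (l := List.range l.length)
    simpa [blockIdx] using this
  rcases eq_or_lt_of_le hle with heq | hlt
  · exfalso
    have heq' : (List.range l.length).countP (fun k => decide ((l.take (k + 1)).sum ≤ i))
        = (List.range l.length).length := by rw [List.length_range]; exact heq
    have := List.countP_eq_length.mp heq' (l.length - 1) (by rw [List.mem_range]; omega)
    simp only [decide_eq_true_eq] at this
    rw [Nat.sub_add_cancel hlen, List.take_length] at this
    omega
  · exact hlt

variable (n a b : ℕ)

/-- The splitting equivalence `Fin (n-b) ⊕ Fin b ≃ Fin n`. -/
def eSum (h : n - b + b = n) : Fin (n - b) ⊕ Fin b ≃ Fin n :=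
  finSumFinEquiv.trans (finCongr h)

lemma eSum_inl (h : n - b + b = n) (p : Fin (n - b)) :
    ((eSum n b h) (Sum.inl p) : ℕ) = (p : ℕ) := by
  simp [eSum]

lemma eSum_inr (h : n - b + b = n) (p : Fin b) :
    ((eSum n b h) (Sum.inr p) : ℕ) = (n - b) + (p : ℕ) := by
  simp [eSum]

/-- The matrix `C` (bottom-left block) built from its free part `C0`. -/
def cMat (han : a ≤ n) (hba : b ≤ a)
    (C0 : Matrix (Fin b) (Fin (a - b)) (ZMod 2)) : Matrix (Fin b) (Fin (n - b)) (ZMod 2) :=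
  Matrix.of fun p q =>
    if hq : n - a ≤ (q : ℕ) then C0 p ⟨(q : ℕ) - (n - a), by have := q.isLt; omega⟩ else 0

/-- Assemble an element of `GL n` from blocks. -/
def buildU (h : n - b + b = n) (han : a ≤ n) (hba : b ≤ a)
    (A : GL (Fin (n - b)) (ZMod 2)) (C0 : Matrix (Fin b) (Fin (a - b)) (ZMod 2))
    (D : GL (Fin b) (ZMod 2)) : GL (Fin n) (ZMod 2) :=
  (Units.mapEquiv (Matrix.reindexAlgEquiv (ZMod 2) (ZMod 2) (eSum n b h)).toMulEquiv)
    ⟨Matrix.fromBlocks A.val 0 (cMat n a b han hba C0) D.val,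
     Matrix.fromBlocks (A⁻¹).val 0 (-((D⁻¹).val * cMat n a b han hba C0 * (A⁻¹).val)) (D⁻¹).val,
     by
       rw [Matrix.fromBlocks_multiply]
       rw [Matrix.zero_mul, add_zero, Units.mul_inv]
       rw [Matrix.mul_zero, Matrix.zero_mul, add_zero]
       rw [Matrix.mul_zero, zero_add, Units.mul_inv]
       rw [Matrix.mul_neg, ← Matrix.mul_assoc, ← Matrix.mul_assoc, Units.mul_inv,
         Matrix.one_mul, add_neg_cancel]
       exact Matrix.fromBlocks_one,
     by
       rw [Matrix.fromBlocks_multiply]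
       rw [Matrix.zero_mul, add_zero, Units.inv_mul]
       rw [Matrix.mul_zero, Matrix.zero_mul, add_zero]
       rw [Matrix.mul_zero, zero_add, Units.inv_mul]
       rw [Matrix.neg_mul, Matrix.mul_assoc, Units.inv_mul, Matrix.mul_one, neg_add_cancel]
       exact Matrix.fromBlocks_one⟩

lemma buildU_val (h : n - b + b = n) (han : a ≤ n) (hba : b ≤ a)
    (A : GL (Fin (n - b)) (ZMod 2)) (C0 : Matrix (Fin b) (Fin (a - b)) (ZMod 2))
    (D : GL (Fin b) (ZMod 2)) :
    ((buildU n a b h han hba A C0 D : GL (Fin n) (ZMod 2)) : Matrix (Fin n) (Fin n) (ZMod 2)) =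
      Matrix.reindex (eSum n b h) (eSum n b h)
        (Matrix.fromBlocks A.val 0 (cMat n a b han hba C0) D.val) := by
  rfl

end AuxStmt10

lemma stmt10_main (n a b : ℕ) (L M : List ℕ)
    (hsL : L.sum + a = n) (hsM : M.sum + b = n) (hba : b ≤ a) :
    Nat.card (paraPair n (L ++ [a]) (M ++ [b])) =
      Nat.card (Matrix (Fin b) (Fin (a - b)) (ZMod 2) ×
        GL (Fin b) (ZMod 2) × (paraPair (n - b) (L ++ [a - b]) M)) := by
  have han : a ≤ n := by omega
  have h : n - b + b = n := by omega
  have hlamL : ∀ i : ℕ, i < n - b → blockIdx (L ++ [a]) i = blockIdx L i :=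
    fun i hi => blockIdx_append _ _ _ (by omega)
  have hlamPL : ∀ i : ℕ, i < n - b → blockIdx (L ++ [a - b]) i = blockIdx L i :=
    fun i hi => blockIdx_append _ _ _ (by omega)
  have hlambot : ∀ i : ℕ, n - b ≤ i → i < n → blockIdx (L ++ [a]) i = L.length := by
    intro i h1 h2
    rw [blockIdx_append _ _ _ (by omega), blockIdx_of_sum_le _ _ (by omega)]
  have hlamlt : ∀ j : ℕ, j < n - a → blockIdx (L ++ [a]) j < L.length := by
    intro j hj
    rw [blockIdx_append _ _ _ (by omega)]
    exact blockIdx_lt_length _ _ (by omega)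
  have hμeq : ∀ i : ℕ, i < n → blockIdx (M ++ [b]) i = blockIdx M i :=
    fun i hi => blockIdx_append _ _ _ (by omega)
  have hμbot : ∀ i : ℕ, n - b ≤ i → blockIdx M i = M.length :=
    fun i h1 => blockIdx_of_sum_le _ _ (by omega)
  have hμlt : ∀ i : ℕ, i < n - b → blockIdx M i < M.length :=
    fun i hi => blockIdx_lt_length _ _ (by omega)
  have hcoel : ∀ (i : Fin n) (p : Fin (n - b)), (eSum n b h).symm i = Sum.inl p →
      (i : ℕ) = (p : ℕ) := by
    intro i p hp
    have hi : i = (eSum n b h) (Sum.inl p) := by rw [← hp, Equiv.apply_symm_apply]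
    rw [hi]; exact eSum_inl n b h p
  have hcoer : ∀ (i : Fin n) (p : Fin b), (eSum n b h).symm i = Sum.inr p →
      (i : ℕ) = n - b + (p : ℕ) := by
    intro i p hp
    have hi : i = (eSum n b h) (Sum.inr p) := by rw [← hp, Equiv.apply_symm_apply]
    rw [hi]; exact eSum_inr n b h p
  -- membership of buildU
  have hmem : ∀ (A : GL (Fin (n - b)) (ZMod 2)) (C0 : Matrix (Fin b) (Fin (a - b)) (ZMod 2))
      (D : GL (Fin b) (ZMod 2)), A ∈ paraPair (n - b) (L ++ [a - b]) M →
      buildU n a b h han hba A C0 D ∈ paraPair n (L ++ [a]) (M ++ [b]) := by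
    intro A C0 D hA
    obtain ⟨hA1, hA2⟩ := hA
    have hval : ∀ i j : Fin n,
        ((buildU n a b h han hba A C0 D : GL (Fin n) (ZMod 2)) :
          Matrix (Fin n) (Fin n) (ZMod 2)) i j
        = (Matrix.fromBlocks A.val 0 (cMat n a b han hba C0) D.val)
            ((eSum n b h).symm i) ((eSum n b h).symm j) := by
      intro i j
      rw [buildU_val]
      rfl
    refine ⟨?_, ?_⟩
    · intro i j hij
      rw [hval]
      rcases hpi : (eSum n b h).symm i with p | p <;> rcases hqj : (eSum n b h).symm j with q | q
      · have e1 := hcoel i p hpi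
        have e2 := hcoel j q hqj
        rw [e1, hlamL _ p.isLt, e2, hlamL _ q.isLt] at hij
        show A.val p q = 0
        apply hA1
        rw [hlamPL _ p.isLt, hlamPL _ q.isLt]
        exact hij
      · show (0 : Matrix (Fin (n - b)) (Fin b) (ZMod 2)) p q = 0
        rfl
      · have e1 := hcoer i p hpi
        have e2 := hcoel j q hqj
        have hq : (q : ℕ) < n - a := by
          by_contra hge
          push_neg at hge
          have h1 : blockIdx (L ++ [a]) (j : ℕ) = L.length := by
            rw [e2, hlamL _ q.isLt, blockIdx_of_sum_le _ _ (by omega)]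
          have h2 : blockIdx (L ++ [a]) (i : ℕ) = L.length :=
            hlambot _ (by omega) i.isLt
          omega
        show cMat n a b han hba C0 p q = 0
        simp only [cMat, Matrix.of_apply]
        rw [dif_neg (by omega)]
      · exfalso
        have e1 := hcoer i p hpi
        have e2 := hcoer j q hqj
        have h1 := hlambot (i : ℕ) (by omega) i.isLt
        have h2 := hlambot (j : ℕ) (by omega) j.isLt
        omega
    · intro i j hij
      rw [hval]
      rcases hpi : (eSum n b h).symm i with p | p <;> rcases hqj : (eSum n b h).symm j with q | q
      · have e1 := hcoel i p hpi
        have e2 := hcoel j q hqj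
        rw [e1, hμeq (p : ℕ) (by have := p.isLt; omega), e2,
          hμeq (q : ℕ) (by have := q.isLt; omega)] at hij
        exact hA2 p q hij
      · show (0 : Matrix (Fin (n - b)) (Fin b) (ZMod 2)) p q = 0
        rfl
      · exfalso
        have e1 := hcoer i p hpi
        have e2 := hcoel j q hqj
        have h1 : blockIdx (M ++ [b]) (i : ℕ) = M.length := by
          rw [hμeq _ i.isLt, hμbot _ (by omega)]
        have h2 : blockIdx (M ++ [b]) (j : ℕ) < M.length := by
          rw [hμeq _ j.isLt, e2]
          exact hμlt _ q.isLt
        omega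
      · exfalso
        have e1 := hcoer i p hpi
        have e2 := hcoer j q hqj
        have h1 : blockIdx (M ++ [b]) (i : ℕ) = M.length := by
          rw [hμeq _ i.isLt, hμbot _ (by omega)]
        have h2 : blockIdx (M ++ [b]) (j : ℕ) = M.length := by
          rw [hμeq _ j.isLt, hμbot _ (by omega)]
        omega
  symm
  apply Nat.card_eq_of_bijective
    (fun t : Matrix (Fin b) (Fin (a - b)) (ZMod 2) × GL (Fin b) (ZMod 2) ×
        (paraPair (n - b) (L ++ [a - b]) M) =>
      (⟨buildU n a b h han hba t.2.2.1 t.1 t.2.1, hmem _ _ _ t.2.2.2⟩ :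
        (paraPair n (L ++ [a]) (M ++ [b]))))
  constructor
  · rintro ⟨C1, D1, A1, hA1m⟩ ⟨C2, D2, A2, hA2m⟩ heq
    simp only [Subtype.mk.injEq] at heq
    have hv := congrArg Units.val heq
    rw [buildU_val, buildU_val] at hv
    have hXY := (Matrix.reindex (eSum n b h) (eSum n b h)).injective hv
    have hA := congrArg Matrix.toBlocks₁₁ hXY
    have hC := congrArg Matrix.toBlocks₂₁ hXY
    have hD := congrArg Matrix.toBlocks₂₂ hXY
    simp only [Matrix.toBlocks_fromBlocks₁₁, Matrix.toBlocks_fromBlocks₂₁,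
      Matrix.toBlocks_fromBlocks₂₂] at hA hC hD
    have hC0 : C1 = C2 := by
      ext p q
      have hcc := congrFun (congrFun hC p) ⟨n - a + (q : ℕ), by have := q.isLt; omega⟩
      simp only [cMat, Matrix.of_apply] at hcc
      rw [dif_pos (by simp), dif_pos (by simp)] at hcc
      have hqe : (⟨n - a + (q : ℕ) - (n - a), by have := q.isLt; omega⟩ : Fin (a - b)) = q := by
        apply Fin.ext
        show n - a + (q : ℕ) - (n - a) = (q : ℕ)
        omega
      rw [hqe] at hcc
      exact hcc
    have hDu : D1 = D2 := Units.ext hD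
    have hAu : A1 = A2 := Units.ext hA
    simp only [Prod.mk.injEq]
    exact ⟨hC0, hDu, Subtype.ext hAu⟩
  · rintro ⟨g, hg⟩
    obtain ⟨hg1, hg2⟩ := hg
    have hg : g ∈ paraPair n (L ++ [a]) (M ++ [b]) := ⟨hg1, hg2⟩
    obtain ⟨hh1, hh2⟩ := (paraPair n (L ++ [a]) (M ++ [b])).inv_mem hg
    set W : Matrix (Fin (n - b) ⊕ Fin b) (Fin (n - b) ⊕ Fin b) (ZMod 2) :=
      (g.val).submatrix (eSum n b h) (eSum n b h) with hW
    set W' : Matrix (Fin (n - b) ⊕ Fin b) (Fin (n - b) ⊕ Fin b) (ZMod 2) :=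
      ((g⁻¹).val).submatrix (eSum n b h) (eSum n b h) with hW'
    have hB : W.toBlocks₁₂ = 0 := by
      ext p q
      show g.val ((eSum n b h) (Sum.inl p)) ((eSum n b h) (Sum.inr q)) = 0
      apply hg2
      rw [eSum_inl, eSum_inr, hμeq (p : ℕ) (by have := p.isLt; omega),
        hμeq (n - b + (q : ℕ)) (by have := q.isLt; omega), hμbot (n - b + (q : ℕ)) (by omega)]
      exact hμlt _ p.isLt
    have hB' : W'.toBlocks₁₂ = 0 := by
      ext p q
      show (g⁻¹).val ((eSum n b h) (Sum.inl p)) ((eSum n b h) (Sum.inr q)) = 0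
      apply hh2
      rw [eSum_inl, eSum_inr, hμeq (p : ℕ) (by have := p.isLt; omega),
        hμeq (n - b + (q : ℕ)) (by have := q.isLt; omega), hμbot (n - b + (q : ℕ)) (by omega)]
      exact hμlt _ p.isLt
    have hmul : W * W' = 1 := by
      rw [hW, hW', Matrix.submatrix_mul_equiv, Units.mul_inv, Matrix.submatrix_one_equiv]
    have hmul' : W' * W = 1 := by
      rw [hW, hW', Matrix.submatrix_mul_equiv, Units.inv_mul, Matrix.submatrix_one_equiv]
    have hWdec : W = Matrix.fromBlocks W.toBlocks₁₁ 0 W.toBlocks₂₁ W.toBlocks₂₂ := by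
      rw [← hB, Matrix.fromBlocks_toBlocks]
    have hWdec' : W' = Matrix.fromBlocks W'.toBlocks₁₁ 0 W'.toBlocks₂₁ W'.toBlocks₂₂ := by
      rw [← hB', Matrix.fromBlocks_toBlocks]
    have hp1 := hmul
    have hp2 := hmul'
    rw [hWdec, hWdec', Matrix.fromBlocks_multiply, ← Matrix.fromBlocks_one] at hp1 hp2
    have hAA := congrArg Matrix.toBlocks₁₁ hp1
    have hDD := congrArg Matrix.toBlocks₂₂ hp1
    have hA'A := congrArg Matrix.toBlocks₁₁ hp2
    have hD'D := congrArg Matrix.toBlocks₂₂ hp2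
    simp only [Matrix.toBlocks_fromBlocks₁₁, Matrix.toBlocks_fromBlocks₂₂,
      Matrix.zero_mul, Matrix.mul_zero, add_zero, zero_add] at hAA hDD hA'A hD'D
    refine ⟨⟨Matrix.of fun p q => W.toBlocks₂₁ p ⟨n - a + (q : ℕ), by have := q.isLt; omega⟩,
      ⟨W.toBlocks₂₂, W'.toBlocks₂₂, hDD, hD'D⟩,
      ⟨⟨W.toBlocks₁₁, W'.toBlocks₁₁, hAA, hA'A⟩, ?_⟩⟩, ?_⟩
    · refine ⟨?_, ?_⟩
      · intro p q hpq
        show g.val ((eSum n b h) (Sum.inl p)) ((eSum n b h) (Sum.inl q)) = 0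
        apply hg1
        rw [eSum_inl, eSum_inl, hlamL _ p.isLt, hlamL _ q.isLt]
        rw [hlamPL _ p.isLt, hlamPL _ q.isLt] at hpq
        exact hpq
      · intro p q hpq
        show g.val ((eSum n b h) (Sum.inl p)) ((eSum n b h) (Sum.inl q)) = 0
        apply hg2
        rw [eSum_inl, eSum_inl, hμeq (p : ℕ) (by have := p.isLt; omega),
          hμeq (q : ℕ) (by have := q.isLt; omega)]
        exact hpq
    · apply Subtype.ext
      apply Units.ext
      show ((buildU n a b h han hba _ _ _ : GL (Fin n) (ZMod 2)) :
        Matrix (Fin n) (Fin n) (ZMod 2)) = g.val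
      rw [buildU_val]
      have hcm : cMat n a b han hba
          (Matrix.of fun p q => W.toBlocks₂₁ p ⟨n - a + (q : ℕ), by have := q.isLt; omega⟩)
          = W.toBlocks₂₁ := by
        ext p q
        simp only [cMat, Matrix.of_apply]
        split_ifs with hq
        · congr 1
          apply Fin.ext
          simp
          omega
        · symm
          show g.val ((eSum n b h) (Sum.inr p)) ((eSum n b h) (Sum.inl q)) = 0
          apply hg1
          rw [eSum_inl, eSum_inr, hlambot (n - b + (p : ℕ)) (by omega)
            (by have := p.isLt; omega)]
          exact hlamlt (q : ℕ) (by omega)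
      show Matrix.reindex (eSum n b h) (eSum n b h)
        (Matrix.fromBlocks W.toBlocks₁₁ 0 (cMat n a b han hba _) W.toBlocks₂₂) = g.val
      rw [hcm, ← hWdec]
      ext i j
      simp [hW, Matrix.reindex_apply, Matrix.submatrix_apply]

theorem stmt10 (n a b : ℕ) (L M : List ℕ)
    (hL : ∀ x ∈ L ++ [a], 0 < x) (hM : ∀ x ∈ M ++ [b], 0 < x)
    (hLsum : (L ++ [a]).sum = n) (hMsum : (M ++ [b]).sum = n) (hba : b ≤ a) :
    Nat.card (paraPair n (L ++ [a]) (M ++ [b])) =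
      2 ^ (b * (a - b)) * Nat.card (GL (Fin b) (ZMod 2)) *
        Nat.card (paraPair (n - b) (L ++ [a - b]) M) := by
  have hsL : L.sum + a = n := by simpa using hLsum
  have hsM : M.sum + b = n := by simpa using hMsum
  rw [stmt10_main n a b L M hsL hsM hba, Nat.card_prod, Nat.card_prod]
  have hm : Nat.card (Matrix (Fin b) (Fin (a - b)) (ZMod 2)) = 2 ^ (b * (a - b)) := by
    rw [Nat.card_eq_fintype_card]
    rw [show Fintype.card (Matrix (Fin b) (Fin (a - b)) (ZMod 2))
      = Fintype.card (Fin b → Fin (a - b) → ZMod 2) from rfl]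
    rw [Fintype.card_fun, Fintype.card_fun, ZMod.card, Fintype.card_fin, Fintype.card_fin,
      ← pow_mul, Nat.mul_comm]
  rw [hm]
  ring
end

section
/- Let λ, μ be compositions of n with last parts λ_l and μ_m satisfying 1 < μ_m < λ_l, and let μ' = (μ_1,...,μ_{m-1}, μ_m - 1, 1). Then the index [P_{λ|μ} : P_{λ|μ'}] equals 2^{μ_m} - 1. -/
open Matrix

open Matrix

section Aux

lemma blockIdx_mono (l : List ℕ) {i j : ℕ} (h : i ≤ j) : blockIdx l i ≤ blockIdx l j := by
  apply List.countP_mono_left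
  intro k _ hk
  simp only [decide_eq_true_eq] at *
  omega

lemma blockIdx_append_s11 (X : List ℕ) (t i : ℕ) :
    blockIdx (X ++ [t]) i = blockIdx X i + if X.sum + t ≤ i then 1 else 0 := by
  unfold blockIdx
  rw [List.length_append, List.length_singleton, List.range_succ, List.countP_append]
  congr 1
  · apply List.countP_congr
    intro k hk
    simp only [List.mem_range] at hk
    rw [List.take_append_of_le_length (by omega)]
  · have ht : (X ++ [t]).take (X.length + 1) = X ++ [t] :=
      List.take_of_length_le (by simp)
    simp [List.countP_cons, ht]

lemma blockIdx_of_sum_le_s11 (X : List ℕ) {i : ℕ} (h : X.sum ≤ i) : blockIdx X i = X.length := by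
  unfold blockIdx
  conv_rhs => rw [← (List.length_range : (List.range X.length).length = X.length)]
  rw [List.countP_eq_length]
  intro k hk
  simp only [decide_eq_true_eq]
  calc (X.take (k+1)).sum ≤ X.sum := by
        conv_rhs => rw [← List.take_append_drop (k+1) X]
        rw [List.sum_append]; omega
    _ ≤ i := h

lemma blockIdx_le_length (X : List ℕ) (i : ℕ) : blockIdx X i ≤ X.length := by
  unfold blockIdx
  calc _ ≤ (List.range X.length).length := List.countP_le_length
    _ = X.length := List.length_range

lemma blockIdx_lt_length_s11 (X : List ℕ) {i : ℕ} (h : i < X.sum) : blockIdx X i < X.length := by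
  have hne : X.length ≠ 0 := by
    intro h0
    rw [List.length_eq_zero_iff] at h0
    subst h0; simp at h
  rcases Nat.lt_or_ge (blockIdx X i) X.length with h' | h'
  · exact h'
  exfalso
  have heq : blockIdx X i = X.length := le_antisymm (blockIdx_le_length X i) h'
  unfold blockIdx at heq
  have heq' : (List.range X.length).countP (fun k => (X.take (k + 1)).sum ≤ i)
      = (List.range X.length).length := by rw [List.length_range]; exact heq
  rw [List.countP_eq_length] at heq'
  have := heq' (X.length - 1) (by simp; omega)
  simp only [decide_eq_true_eq] at this
  rw [show X.length - 1 + 1 = X.length by omega, List.take_length] at this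
  omega

lemma mem_paraPair_iff {n : ℕ} {l m : List ℕ} {g : GL (Fin n) (ZMod 2)} :
    g ∈ paraPair n l m ↔
      ((∀ i j : Fin n, blockIdx l j < blockIdx l i →
        (g : Matrix (Fin n) (Fin n) (ZMod 2)) i j = 0) ∧
      (∀ i j : Fin n, blockIdx m i < blockIdx m j →
        (g : Matrix (Fin n) (Fin n) (ZMod 2)) i j = 0)) :=
  Iff.rfl

lemma zmod2_cases : ∀ x : ZMod 2, x = 0 ∨ x = 1 := by decide
lemma zmod2_mul_eq_one : ∀ x y : ZMod 2, x * y = 1 → y = 1 := by decide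
lemma zmod2_add_self : ∀ x : ZMod 2, x + x = 0 := by decide

end Aux

theorem stmt11 (n a b : ℕ) (L M : List ℕ)
    (hL : ∀ x ∈ L ++ [a], 0 < x) (hM : ∀ x ∈ M ++ [b], 0 < x)
    (hLsum : (L ++ [a]).sum = n) (hMsum : (M ++ [b]).sum = n)
    (h1 : 1 < b) (h2 : b < a) :
    (paraPair n (L ++ [a]) (M ++ [b - 1, 1])).relIndex (paraPair n (L ++ [a]) (M ++ [b])) =
      2 ^ b - 1 := by
  classical
  have hLs : L.sum + a = n := by simpa using hLsum
  have hMs : M.sum + b = n := by simpa using hMsum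
  have hbn : b ≤ n := by omega
  have hn0 : 0 < n := by omega
  set lam := L ++ [a] with hlam
  set mu := M ++ [b] with hmu
  set mu' := M ++ [b - 1, 1] with hmu'
  -- blockIdx facts
  have flam : ∀ i : ℕ, i < n → blockIdx lam i = blockIdx L i := by
    intro i hi; rw [hlam, blockIdx_append_s11, if_neg (by omega), add_zero]
  have fmu : ∀ i : ℕ, i < n → blockIdx mu i = blockIdx M i := by
    intro i hi; rw [hmu, blockIdx_append_s11, if_neg (by omega), add_zero]
  have fmu' : ∀ i : ℕ, i < n →
      blockIdx mu' i = blockIdx M i + (if i = n - 1 then 1 else 0) := by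
    intro i hi
    have hsp : mu' = (M ++ [b - 1]) ++ [1] := by simp [hmu']
    rw [hsp, blockIdx_append_s11, blockIdx_append_s11]
    have hs1 : (M ++ [b - 1]).sum = n - 1 := by
      rw [List.sum_append]; simp; omega
    rw [hs1]
    have hno : ¬ (n - 1 + 1 ≤ i) := by omega
    rw [if_neg hno, add_zero]
    congr 1
    by_cases h : i = n - 1
    · rw [if_pos (show M.sum + (b-1) ≤ i by omega), if_pos h]
    · rw [if_neg (show ¬ M.sum + (b-1) ≤ i by omega), if_neg h]
  have fMc : ∀ i : ℕ, n - b ≤ i → blockIdx M i = M.length :=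
    fun i hi => blockIdx_of_sum_le_s11 M (by omega)
  have fMlow : ∀ i : ℕ, i < n - b → blockIdx M i < M.length :=
    fun i hi => blockIdx_lt_length_s11 M (by omega)
  have fMle : ∀ i : ℕ, blockIdx M i ≤ M.length := fun i => blockIdx_le_length M i
  have fLc : ∀ i : ℕ, n - b ≤ i → blockIdx L i = L.length :=
    fun i hi => blockIdx_of_sum_le_s11 L (by omega)
  have fLle : ∀ i : ℕ, blockIdx L i ≤ L.length := fun i => blockIdx_le_length L i
  set K := paraPair n lam mu with hK
  set H := paraPair n lam mu' with hH
  set p : Fin n := ⟨n - 1, by omega⟩ with hp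
  -- column of an element of H is e_p
  have colH : ∀ h : GL (Fin n) (ZMod 2), h ∈ H →
      (∀ k : Fin n, k ≠ p → (h : Matrix (Fin n) (Fin n) (ZMod 2)) k p = 0) ∧
      (h : Matrix (Fin n) (Fin n) (ZMod 2)) p p = 1 := by
    intro h hh
    obtain ⟨hh1, hh2⟩ := mem_paraPair_iff.mp hh
    have hcol : ∀ k : Fin n, k ≠ p → (h : Matrix (Fin n) (Fin n) (ZMod 2)) k p = 0 := by
      intro k hk
      apply hh2 k p
      have hkv : (k : ℕ) ≠ n - 1 := by
        intro hc; exact hk (Fin.ext hc)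
      rw [fmu' k k.2, fmu' (p : ℕ) p.2]
      have hpv : (p : ℕ) = n - 1 := rfl
      rw [hpv, if_neg hkv, if_pos rfl, fMc (n-1) (by omega)]
      have := fMle (k : ℕ)
      omega
    refine ⟨hcol, ?_⟩
    have hone : ((h⁻¹ : GL (Fin n) (ZMod 2)) : Matrix (Fin n) (Fin n) (ZMod 2)) *
        (h : Matrix (Fin n) (Fin n) (ZMod 2)) = 1 := by
      rw [← Units.val_mul, inv_mul_cancel, Units.val_one]
    have h1e := congrFun (congrFun hone p) p
    rw [Matrix.mul_apply, Matrix.one_apply_eq] at h1e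
    rw [Finset.sum_eq_single p] at h1e
    · exact zmod2_mul_eq_one _ _ h1e
    · intro k _ hk
      rw [hcol k hk, mul_zero]
    · intro hc; exact absurd (Finset.mem_univ p) hc
  -- membership in H from membership in K plus column condition
  have memH_of : ∀ g : GL (Fin n) (ZMod 2), g ∈ K →
      (∀ k : Fin n, k ≠ p → (g : Matrix (Fin n) (Fin n) (ZMod 2)) k p = 0) → g ∈ H := by
    intro g hg hcol
    obtain ⟨hg1, hg2⟩ := mem_paraPair_iff.mp hg
    rw [mem_paraPair_iff]
    refine ⟨hg1, ?_⟩
    intro i j hij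
    by_cases hj : (j : ℕ) = n - 1
    · have hjp : j = p := Fin.ext hj
      subst hjp
      by_cases hi : i = p
      · subst hi; exact absurd hij (lt_irrefl _)
      · exact hcol i hi
    · rw [fmu' i i.2, fmu' j j.2, if_neg hj] at hij
      apply hg2 i j
      rw [fmu i i.2, fmu j j.2]
      by_cases hi : (i : ℕ) = n - 1
      · rw [if_pos hi] at hij
        have h1 : blockIdx M (i : ℕ) = M.length := fMc _ (by omega)
        have := fMle (j : ℕ)
        omega
      · rw [if_neg hi] at hij; omega
  -- the column of an element of K vanishes below n - b
  have colK_low : ∀ g : GL (Fin n) (ZMod 2), g ∈ K → ∀ i : Fin n, (i : ℕ) < n - b →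
      (g : Matrix (Fin n) (Fin n) (ZMod 2)) i p = 0 := by
    intro g hg i hi
    apply (mem_paraPair_iff.mp hg).2 i p
    rw [fmu i i.2, fmu (p : ℕ) p.2]
    simp only [hp]
    rw [fMc (n - 1) (by omega)]
    exact fMlow _ hi
  -- the column of a unit is nonzero
  have colK_ne : ∀ g : GL (Fin n) (ZMod 2),
      (fun i : Fin n => (g : Matrix (Fin n) (Fin n) (ZMod 2)) i p) ≠ 0 := by
    intro g h0
    have hone : ((g⁻¹ : GL (Fin n) (ZMod 2)) : Matrix (Fin n) (Fin n) (ZMod 2)) *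
        (g : Matrix (Fin n) (Fin n) (ZMod 2)) = 1 := by
      rw [← Units.val_mul, inv_mul_cancel, Units.val_one]
    have h1e := congrFun (congrFun hone p) p
    rw [Matrix.mul_apply, Matrix.one_apply_eq] at h1e
    rw [Finset.sum_eq_zero] at h1e
    · exact one_ne_zero h1e.symm
    · intro k _
      have : (g : Matrix (Fin n) (Fin n) (ZMod 2)) k p = 0 := congrFun h0 k
      rw [this, mul_zero]

  -- the invariant map to nonzero columns
  set V := {v : Fin n → ZMod 2 // (∀ i : Fin n, (i : ℕ) < n - b → v i = 0) ∧ v ≠ 0} with hV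
  set f : {x : GL (Fin n) (ZMod 2) // x ∈ K} → V :=
    fun g => ⟨fun i => ((g : GL (Fin n) (ZMod 2)) : Matrix (Fin n) (Fin n) (ZMod 2)) i p,
      fun i hi => colK_low (g : GL (Fin n) (ZMod 2)) g.2 i hi,
      colK_ne (g : GL (Fin n) (ZMod 2))⟩ with hf
  have hwd : ∀ x y : {x : GL (Fin n) (ZMod 2) // x ∈ K},
      (QuotientGroup.leftRel (H.subgroupOf K)) x y → f x = f y := by
    intro x y hxy
    rw [QuotientGroup.leftRel_apply, Subgroup.mem_subgroupOf] at hxy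
    set z : GL (Fin n) (ZMod 2) := ((x⁻¹ * y : K) : GL (Fin n) (ZMod 2)) with hzdef
    have hz : z = (↑x : GL (Fin n) (ZMod 2))⁻¹ * ↑y := rfl
    obtain ⟨hcol, hpp⟩ := colH z hxy
    apply Subtype.ext; funext i
    show ((↑x : GL (Fin n) (ZMod 2)) : Matrix (Fin n) (Fin n) (ZMod 2)) i p
        = ((↑y : GL (Fin n) (ZMod 2)) : Matrix (Fin n) (Fin n) (ZMod 2)) i p
    have hyx : (↑y : GL (Fin n) (ZMod 2)) = ↑x * z := by rw [hz]; group
    have hyM : ((↑y : GL (Fin n) (ZMod 2)) : Matrix (Fin n) (Fin n) (ZMod 2))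
        = ((↑x : GL (Fin n) (ZMod 2)) : Matrix (Fin n) (Fin n) (ZMod 2)) *
          (z : Matrix (Fin n) (Fin n) (ZMod 2)) := by rw [hyx, Units.val_mul]
    rw [hyM, Matrix.mul_apply, Finset.sum_eq_single p]
    · rw [hpp, mul_one]
    · intro k _ hk; rw [hcol k hk, mul_zero]
    · intro hc; exact absurd (Finset.mem_univ p) hc
  set phi : ({x : GL (Fin n) (ZMod 2) // x ∈ K} ⧸ H.subgroupOf K) → V :=
    Quotient.lift f hwd with hphi
  have hinj : Function.Injective phi := by
    intro q1 q2
    refine Quotient.inductionOn₂ q1 q2 ?_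
    intro x y hfe
    refine Quotient.sound (QuotientGroup.leftRel_apply.mpr ?_)
    rw [Subgroup.mem_subgroupOf]
    have hfe' : ∀ l : Fin n,
        ((↑x : GL (Fin n) (ZMod 2)) : Matrix (Fin n) (Fin n) (ZMod 2)) l p
        = ((↑y : GL (Fin n) (ZMod 2)) : Matrix (Fin n) (Fin n) (ZMod 2)) l p :=
      fun l => congrFun (congrArg Subtype.val hfe) l
    apply memH_of _ (x⁻¹ * y : K).2
    intro k hk
    have hz : ((x⁻¹ * y : K) : GL (Fin n) (ZMod 2))
        = (↑x : GL (Fin n) (ZMod 2))⁻¹ * ↑y := rfl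
    rw [hz, Units.val_mul, Matrix.mul_apply]
    have : ∀ l : Fin n,
        (((↑x : GL (Fin n) (ZMod 2))⁻¹ : GL (Fin n) (ZMod 2)) : Matrix (Fin n) (Fin n) (ZMod 2)) k l *
        ((↑y : GL (Fin n) (ZMod 2)) : Matrix (Fin n) (Fin n) (ZMod 2)) l p
        = (((↑x : GL (Fin n) (ZMod 2))⁻¹ : GL (Fin n) (ZMod 2)) : Matrix (Fin n) (Fin n) (ZMod 2)) k l *
        ((↑x : GL (Fin n) (ZMod 2)) : Matrix (Fin n) (Fin n) (ZMod 2)) l p := by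
      intro l; rw [hfe' l]
    rw [Finset.sum_congr rfl (fun l _ => this l), ← Matrix.mul_apply, ← Units.val_mul,
      inv_mul_cancel, Units.val_one]
    exact Matrix.one_apply_ne hk
  have hsurj : Function.Surjective phi := by
    rintro ⟨v, hv1, hv2⟩
    obtain ⟨i0, hvi0⟩ : ∃ i, v i ≠ 0 := by
      by_contra h0; push_neg at h0; exact hv2 (funext fun i => h0 i)
    have hvi01 : v i0 = 1 := (zmod2_cases (v i0)).resolve_left hvi0
    have hi0c : n - b ≤ (i0 : ℕ) := by
      by_contra hc; exact hvi0 (hv1 i0 (by omega))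
    set τ := Equiv.swap i0 p with hτ
    have hτl : τ i0 = p := Equiv.swap_apply_left i0 p
    have hτr : τ p = i0 := Equiv.swap_apply_right i0 p
    set S : Matrix (Fin n) (Fin n) (ZMod 2) :=
      fun i j => if i = τ j then 1 else 0 with hSdef
    set N : Matrix (Fin n) (Fin n) (ZMod 2) :=
      fun i j => if j = i0 ∧ v i = 1 ∧ i ≠ i0 then 1 else 0 with hNdef
    have hSS : S * S = 1 := by
      ext i j
      rw [Matrix.mul_apply, Finset.sum_eq_single (τ j)]
      · have h1 : S (τ j) j = 1 := if_pos rfl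
        have h2 : S i (τ j) = if i = j then 1 else 0 := by
          show (if i = τ (τ j) then (1 : ZMod 2) else 0) = _
          rw [Equiv.swap_apply_self]
        rw [h1, mul_one, h2, Matrix.one_apply]
      · intro k _ hk
        have : S k j = 0 := if_neg hk
        rw [this, mul_zero]
      · intro hc; exact absurd (Finset.mem_univ _) hc
    have hNN : N * N = 0 := by
      ext i j
      rw [Matrix.mul_apply]
      apply Finset.sum_eq_zero
      intro k _
      by_cases hk : k = i0
      · have : N k j = 0 := by
          apply if_neg; rintro ⟨-, -, hne⟩; exact hne hk
        rw [this, mul_zero]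
      · have : N i k = 0 := by
          apply if_neg; rintro ⟨h, -, -⟩; exact hk h
        rw [this, zero_mul]
    have hNN1 : (1 + N) * (1 + N) = 1 := by
      have hexp : (1 + N) * (1 + N) = 1 + (N + N) + N * N := by noncomm_ring
      have hNz : N + N = 0 := by
        ext i j; rw [Matrix.add_apply]; exact zmod2_add_self _
      rw [hexp, hNz, hNN, add_zero, add_zero]
    set g : Matrix (Fin n) (Fin n) (ZMod 2) := (1 + N) * S with hgdef
    set gi : Matrix (Fin n) (Fin n) (ZMod 2) := S * (1 + N) with hgidef
    have hgh : g * gi = 1 := by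
      rw [hgdef, hgidef, mul_assoc, ← mul_assoc S S, hSS, one_mul, hNN1]
    have hhg : gi * g = 1 := by
      rw [hgdef, hgidef, mul_assoc, ← mul_assoc (1 + N) (1 + N), hNN1, one_mul, hSS]
    set G : GL (Fin n) (ZMod 2) := ⟨g, gi, hgh, hhg⟩ with hGdef
    have hGcoe : (G : Matrix (Fin n) (Fin n) (ZMod 2)) = g := rfl
    have hent : ∀ i j : Fin n, g i j =
        (if i = τ j then 1 else 0) + (if j = p ∧ v i = 1 ∧ i ≠ i0 then 1 else 0) := by
      intro i j
      rw [hgdef, Matrix.add_mul, Matrix.one_mul, Matrix.add_apply]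
      congr 1
      rw [Matrix.mul_apply, Finset.sum_eq_single (τ j)]
      · have h1 : S (τ j) j = 1 := if_pos rfl
        rw [h1, mul_one]
        show (if τ j = i0 ∧ v i = 1 ∧ i ≠ i0 then (1 : ZMod 2) else 0) = _
        have hiff : (τ j = i0) ↔ (j = p) := by
          constructor
          · intro h; have := τ.injective (h.trans hτr.symm); exact this
          · intro h; rw [h]; exact hτr
        by_cases hc : j = p
        · by_cases hc2 : v i = 1 ∧ i ≠ i0
          · rw [if_pos ⟨hiff.mpr hc, hc2.1, hc2.2⟩, if_pos ⟨hc, hc2.1, hc2.2⟩]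
          · rw [if_neg (fun h => hc2 ⟨h.2.1, h.2.2⟩), if_neg (fun h => hc2 ⟨h.2.1, h.2.2⟩)]
        · rw [if_neg (fun h => hc (hiff.mp h.1)), if_neg (fun h => hc h.1)]
      · intro k _ hk
        have : S k j = 0 := if_neg hk
        rw [this, mul_zero]
      · intro hc; exact absurd (Finset.mem_univ _) hc
    have hcolG : ∀ i : Fin n, g i p = v i := by
      intro i
      rw [hent i p, hτr]
      by_cases hii : i = i0
      · subst hii
        rw [if_pos rfl, if_neg (by rintro ⟨-, -, hne⟩; exact hne rfl), add_zero, hvi01]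
      · rw [if_neg hii]
        rcases zmod2_cases (v i) with h0 | h01
        · rw [if_neg (by rintro ⟨-, hv, -⟩; rw [h0] at hv; exact absurd hv (by decide)),
            h0, add_zero]
        · rw [if_pos ⟨rfl, h01, hii⟩, h01, zero_add]
    have hGK : G ∈ K := by
      rw [mem_paraPair_iff]
      constructor
      · intro i j hij
        have hij' : blockIdx L (j : ℕ) < blockIdx L (i : ℕ) := by
          rw [← flam _ i.2, ← flam _ j.2]; exact hij
        have hji : (j : ℕ) < (i : ℕ) := by
          by_contra hc; push_neg at hc
          exact absurd (blockIdx_mono L hc) (by omega)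
        show g i j = 0
        rw [hent]
        have hjp : ¬ (j = p ∧ v i = 1 ∧ i ≠ i0) := by
          rintro ⟨rfl, -, -⟩
          have := i.2
          have : (p : ℕ) = n - 1 := rfl
          omega
        rw [if_neg hjp, add_zero]
        apply if_neg
        intro he
        by_cases hj0 : j = i0
        · subst hj0
          rw [hτl] at he
          have h3 : blockIdx L (i : ℕ) = L.length := by
            rw [he]; exact fLc _ (by show n - b ≤ n - 1; omega)
          have h4 : blockIdx L (j : ℕ) = L.length := fLc _ hi0c
          omega
        · by_cases hjp2 : j = p
          · rcases hjp2 with rfl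
            have : (p : ℕ) = n - 1 := rfl
            have := i.2
            omega
          · rw [Equiv.swap_apply_of_ne_of_ne hj0 hjp2] at he
            rw [he] at hji
            omega
      · intro i j hij
        have hij' : blockIdx M (i : ℕ) < blockIdx M (j : ℕ) := by
          rw [← fmu _ i.2, ← fmu _ j.2]; exact hij
        have hilow : (i : ℕ) < n - b := by
          by_contra hc; push_neg at hc
          rw [fMc _ hc] at hij'
          exact absurd (fMle (j : ℕ)) (by omega)
        show g i j = 0
        rw [hent]
        rw [if_neg (show ¬ (j = p ∧ v i = 1 ∧ i ≠ i0) by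
          rintro ⟨-, hv, -⟩
          rw [hv1 i hilow] at hv
          exact absurd hv (by decide)), add_zero]
        apply if_neg
        intro he
        by_cases hj0 : j = i0
        · subst hj0
          rw [hτl] at he
          rw [he] at hilow
          have : (p : ℕ) = n - 1 := rfl
          omega
        · by_cases hjp2 : j = p
          · rcases hjp2 with rfl
            rw [hτr] at he
            rw [he] at hilow
            omega
          · rw [Equiv.swap_apply_of_ne_of_ne hj0 hjp2] at he
            rw [he] at hij'
            omega
    refine ⟨Quotient.mk (QuotientGroup.leftRel (H.subgroupOf K)) ⟨G, hGK⟩, ?_⟩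
    show f ⟨G, hGK⟩ = ⟨v, hv1, hv2⟩
    apply Subtype.ext
    funext i
    show (G : Matrix (Fin n) (Fin n) (ZMod 2)) i p = v i
    rw [hGcoe]
    exact hcolG i
  -- counting V
  have hcardV : Nat.card V = 2 ^ b - 1 := by
    have E : V ≃ {w : Fin b → ZMod 2 // w ≠ 0} :=
      { toFun := fun v => ⟨fun k => v.1 ⟨n - b + (k : ℕ), by omega⟩, by
          intro h0
          obtain ⟨i, hi⟩ : ∃ i, v.1 i ≠ 0 := by
            by_contra hc; push_neg at hc; exact v.2.2 (funext fun i => hc i)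
          have hic : n - b ≤ (i : ℕ) := by
            by_contra hc; exact hi (v.2.1 i (by omega))
          have := congrFun h0 ⟨(i : ℕ) - (n - b), by omega⟩
          simp only [Pi.zero_apply] at this
          exact hi ((congrArg v.1 (Fin.ext (show (i : ℕ) = n - b + ((i : ℕ) - (n - b)) by
            omega))).trans this)⟩
        invFun := fun w => ⟨fun i => if h : n - b ≤ (i : ℕ) then w.1 ⟨(i : ℕ) - (n - b), by omega⟩ else 0,
          fun i hi => dif_neg (by omega), by
          intro h0
          obtain ⟨k, hk⟩ : ∃ k, w.1 k ≠ 0 := by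
            by_contra hc; push_neg at hc; exact w.2 (funext fun k => hc k)
          have := congrFun h0 ⟨n - b + (k : ℕ), by omega⟩
          simp only [Pi.zero_apply] at this
          rw [dif_pos (by show n - b ≤ n - b + (k : ℕ); omega)] at this
          exact hk ((congrArg w.1 (Fin.ext (show (k : ℕ) = n - b + (k : ℕ) - (n - b) by
            omega))).trans this)⟩
        left_inv := by
          rintro ⟨v, hv1, hv2⟩
          apply Subtype.ext
          funext i
          show (if h : n - b ≤ (i : ℕ) then v ⟨n - b + ((i : ℕ) - (n - b)), _⟩ else 0) = v i
          by_cases hc : n - b ≤ (i : ℕ)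
          · rw [dif_pos hc]
            congr 1
            apply Fin.ext
            show n - b + ((i : ℕ) - (n - b)) = (i : ℕ)
            omega
          · rw [dif_neg hc, hv1 i (by omega)]
        right_inv := by
          rintro ⟨w, hw⟩
          apply Subtype.ext
          funext k
          show (if h : n - b ≤ n - b + (k : ℕ) then w ⟨n - b + (k : ℕ) - (n - b), _⟩ else 0) = w k
          rw [dif_pos (by omega)]
          congr 1
          apply Fin.ext
          show n - b + (k : ℕ) - (n - b) = (k : ℕ)
          omega }
    rw [Nat.card_congr E, Nat.card_eq_fintype_card, Fintype.card_subtype_compl]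
    simp [ZMod.card]
  have hrel : H.relIndex K = Nat.card
      ({x : GL (Fin n) (ZMod 2) // x ∈ K} ⧸ H.subgroupOf K) :=
    Subgroup.index_eq_card _
  rw [hrel, Nat.card_congr (Equiv.ofBijective phi ⟨hinj, hsurj⟩), hcardV]
end

section
/- Let λ, μ be compositions of n with λ_l = 1 (last part of λ) and μ_m ≥ 2 (last part of μ), and let μ' = (μ_1,...,μ_{m-1}, μ_m - 1, 1). Then the index [P_{λ|μ} : P_{λ|μ'}] equals 2^{μ_m - 1}. -/
open Matrix

open Matrix

lemma sum_take_le' (M : List ℕ) (k : ℕ) : (M.take k).sum ≤ M.sum := by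
  conv_rhs => rw [← List.take_append_drop k M]
  rw [List.sum_append]
  exact Nat.le_add_right _ _

lemma blockIdx_le (M : List ℕ) (i : ℕ) : blockIdx M i ≤ M.length := by
  calc blockIdx M i ≤ (List.range M.length).length := List.countP_le_length
    _ = M.length := List.length_range

lemma blockIdx_of_le (M : List ℕ) (i : ℕ) (h : M.sum ≤ i) : blockIdx M i = M.length := by
  unfold blockIdx
  have := (List.countP_eq_length (p := fun k => decide ((M.take (k + 1)).sum ≤ i))
    (l := List.range M.length)).mpr ?_
  · simpa using this
  · intro k _
    simpa using le_trans (sum_take_le' M (k+1)) h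

lemma blockIdx_lt (M : List ℕ) (i : ℕ) (h : i < M.sum) : blockIdx M i < M.length := by
  have hlen : 0 < M.length := by
    rcases M with _ | _ <;> simp_all
  rcases Nat.lt_or_ge (blockIdx M i) M.length with h' | h'
  · exact h'
  · exfalso
    have heq : blockIdx M i = M.length := le_antisymm (blockIdx_le M i) h'
    unfold blockIdx at heq
    have heq2 : List.countP (fun k => decide ((M.take (k + 1)).sum ≤ i)) (List.range M.length)
        = (List.range M.length).length := by simpa using heq
    have := List.countP_eq_length.mp heq2 (M.length - 1) (by simp [List.mem_range]; omega)
    simp only [decide_eq_true_eq] at this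
    have h2 : M.length - 1 + 1 = M.length := by omega
    rw [h2, List.take_length] at this
    omega

lemma blockIdx_concat (M : List ℕ) (b i : ℕ) :
    blockIdx (M ++ [b]) i = blockIdx M i + (if M.sum + b ≤ i then 1 else 0) := by
  unfold blockIdx
  rw [List.length_append, List.length_singleton, List.range_succ, List.countP_append]
  congr 1
  · apply List.countP_congr
    intro k hk
    rw [List.mem_range] at hk
    rw [List.take_append_of_le_length (by omega)]
  · have h1 : (M ++ [b]).take (M.length + 1) = M ++ [b] := by
      apply List.take_of_length_le
      simp
    rw [List.countP_singleton, h1]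
    simp

def uA (n s b : ℕ) (v : Fin (b-1) → ZMod 2) : Matrix (Fin n) (Fin n) (ZMod 2) :=
  Matrix.of fun i j => if ((j : ℕ) = n - 1 ∧ s ≤ (i:ℕ) ∧ (i:ℕ) < n - 1) then
    (if h : (i:ℕ) - s < b - 1 then v ⟨(i:ℕ) - s, h⟩ else 0) else 0

lemma uA_mul_uA (n s b : ℕ) (v w : Fin (b-1) → ZMod 2) :
    uA n s b v * uA n s b w = 0 := by
  ext i j
  rw [Matrix.mul_apply]
  apply Finset.sum_eq_zero
  intro k _
  by_cases h1 : ((k : ℕ) = n - 1 ∧ s ≤ (i:ℕ) ∧ (i:ℕ) < n - 1)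
  · have h2 : ¬ ((j : ℕ) = n - 1 ∧ s ≤ (k:ℕ) ∧ (k:ℕ) < n - 1) := by
      rintro ⟨-, -, hk⟩; omega
    show uA n s b v i k * uA n s b w k j = 0
    unfold uA
    rw [Matrix.of_apply, Matrix.of_apply, if_neg h2, mul_zero]
  · show uA n s b v i k * uA n s b w k j = 0
    unfold uA
    rw [Matrix.of_apply, if_neg h1, zero_mul]

lemma uA_add_self (n s b : ℕ) (v : Fin (b-1) → ZMod 2) :
    uA n s b v + uA n s b v = 0 := by
  ext i j
  show uA n s b v i j + uA n s b v i j = 0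
  have : ∀ a : ZMod 2, a + a = 0 := by decide
  exact this _

def uM (n s b : ℕ) (v : Fin (b-1) → ZMod 2) : Matrix (Fin n) (Fin n) (ZMod 2) :=
  1 + uA n s b v

lemma uM_mul_self (n s b : ℕ) (v : Fin (b-1) → ZMod 2) :
    uM n s b v * uM n s b v = 1 := by
  unfold uM
  have h : (1 + uA n s b v) * (1 + uA n s b v)
      = 1 + (uA n s b v + uA n s b v) + uA n s b v * uA n s b v := by noncomm_ring
  rw [h, uA_add_self, uA_mul_uA, add_zero, add_zero]

def uUnit (n s b : ℕ) (v : Fin (b-1) → ZMod 2) : GL (Fin n) (ZMod 2) :=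
  ⟨uM n s b v, uM n s b v, uM_mul_self n s b v, uM_mul_self n s b v⟩

lemma uUnit_apply (n s b : ℕ) (v : Fin (b-1) → ZMod 2) (i j : Fin n) :
    (uUnit n s b v : Matrix (Fin n) (Fin n) (ZMod 2)) i j
      = (if i = j then 1 else 0) + (if ((j : ℕ) = n - 1 ∧ s ≤ (i:ℕ) ∧ (i:ℕ) < n - 1) then
        (if h : (i:ℕ) - s < b - 1 then v ⟨(i:ℕ) - s, h⟩ else 0) else 0) := by
  show (uM n s b v) i j = _
  unfold uM uA
  rw [Matrix.add_apply, Matrix.of_apply, Matrix.one_apply]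

set_option maxHeartbeats 1600000 in
theorem stmt12 (n b : ℕ) (L M : List ℕ)
    (hL : ∀ x ∈ L ++ [1], 0 < x) (hM : ∀ x ∈ M ++ [b], 0 < x)
    (hLsum : (L ++ [1]).sum = n) (hMsum : (M ++ [b]).sum = n) (hb : 2 ≤ b) :
    (paraPair n (L ++ [1]) (M ++ [b - 1, 1])).relIndex (paraPair n (L ++ [1]) (M ++ [b])) =
      2 ^ (b - 1) := by
  have hs : M.sum + b = n := by simpa using hMsum
  have hL1 : L.sum + 1 = n := by simpa using hLsum
  set K := paraPair n (L ++ [1]) (M ++ [b]) with hK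
  set H := paraPair n (L ++ [1]) (M ++ [b - 1, 1]) with hH
  have hn2 : 2 ≤ n := by omega
  set j₀ : Fin n := ⟨n - 1, by omega⟩ with hj₀
  have hj₀v : (j₀ : ℕ) = n - 1 := rfl
  -- blockIdx computations
  have hm : ∀ x : ℕ, x < n → blockIdx (M ++ [b]) x = blockIdx M x := by
    intro x hx
    rw [blockIdx_concat, if_neg (by omega), add_zero]
  have hm' : ∀ x : ℕ, x < n →
      blockIdx (M ++ [b - 1, 1]) x = blockIdx M x + (if M.sum + (b - 1) ≤ x then 1 else 0) := by
    intro x hx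
    have he : M ++ [b - 1, 1] = (M ++ [b - 1]) ++ [1] := by simp
    rw [he, blockIdx_concat, blockIdx_concat]
    have hsum : (M ++ [b - 1]).sum = M.sum + (b - 1) := by simp
    rw [hsum]
    rw [show (if M.sum + (b - 1) + 1 ≤ x then 1 else 0) = 0 from if_neg (by omega), add_zero]
  have hMeq : ∀ x : ℕ, M.sum ≤ x → blockIdx M x = M.length := fun x hx => blockIdx_of_le M x hx
  have hMle : ∀ x : ℕ, blockIdx M x ≤ M.length := blockIdx_le M
  have hl : ∀ x : ℕ, x < n → blockIdx (L ++ [1]) x = blockIdx L x := by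
    intro x hx
    rw [blockIdx_concat, if_neg (by omega), add_zero]
  have hLeq : blockIdx L (n - 1) = L.length := blockIdx_of_le L _ (by omega)
  have hLlt : ∀ x : ℕ, x < n - 1 → blockIdx L x < L.length := fun x hx =>
    blockIdx_lt L x (by omega)
  have hLle : ∀ x : ℕ, blockIdx L x ≤ L.length := blockIdx_le L
  -- the λ-condition forces the last row to be e_{j₀}
  have row : ∀ g : GL (Fin n) (ZMod 2),
      (∀ i j : Fin n, blockIdx (L ++ [1]) j < blockIdx (L ++ [1]) i →
        (g : Matrix (Fin n) (Fin n) (ZMod 2)) i j = 0) →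
      (∀ j : Fin n, (j : ℕ) < n - 1 → (g : Matrix (Fin n) (Fin n) (ZMod 2)) j₀ j = 0) ∧
        (g : Matrix (Fin n) (Fin n) (ZMod 2)) j₀ j₀ = 1 := by
    intro g hg1
    have hrow : ∀ j : Fin n, (j : ℕ) < n - 1 → (g : Matrix (Fin n) (Fin n) (ZMod 2)) j₀ j = 0 := by
      intro j hj
      apply hg1
      rw [hl j j.isLt, hl j₀ j₀.isLt, hj₀v, hLeq]
      exact hLlt j hj
    refine ⟨hrow, ?_⟩
    have hgi : (g : Matrix (Fin n) (Fin n) (ZMod 2)) * ((g⁻¹ : GL (Fin n) (ZMod 2)) :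
        Matrix (Fin n) (Fin n) (ZMod 2)) = 1 := by
      exact g.mul_inv
    have h1 : ((g : Matrix (Fin n) (Fin n) (ZMod 2)) * ((g⁻¹ : GL (Fin n) (ZMod 2)) :
        Matrix (Fin n) (Fin n) (ZMod 2))) j₀ j₀ = 1 := by
      rw [hgi]; simp
    rw [Matrix.mul_apply, Finset.sum_eq_single j₀] at h1
    · have hdec : ∀ a c : ZMod 2, a * c = 1 → a = 1 := by decide
      exact hdec _ _ h1
    · intro k _ hk
      have hkv : (k : ℕ) < n - 1 := by
        have h1 := k.isLt
        have h2 : (k : ℕ) ≠ n - 1 := fun he => hk (Fin.ext (by rw [he, hj₀v]))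
        omega
      rw [hrow k hkv, zero_mul]
    · intro hj; exact absurd (Finset.mem_univ j₀) hj
  -- column j₀ of elements of H is e_{j₀}
  have colH : ∀ h : GL (Fin n) (ZMod 2), h ∈ H → ∀ k : Fin n, (k : ℕ) < n - 1 →
      (h : Matrix (Fin n) (Fin n) (ZMod 2)) k j₀ = 0 := by
    intro h hh k hk
    apply hh.2
    rw [hm' k k.isLt, hm' j₀ j₀.isLt, hj₀v, if_neg (by omega), if_pos (by omega), add_zero]
    have := hMle (k : ℕ)
    have := hMeq (n - 1) (by omega)
    omega
  -- uUnit is in K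
  have hUK : ∀ v : Fin (b-1) → ZMod 2, uUnit n M.sum b v ∈ K := by
    intro v
    constructor
    · intro i j hlt
      rw [uUnit_apply]
      rcases eq_or_ne i j with rfl | hne
      · exact absurd hlt (lt_irrefl _)
      rw [if_neg hne, zero_add, if_neg ?_]
      rintro ⟨hjv, hi1, hi2⟩
      rw [hl j j.isLt, hl i i.isLt, hjv, hLeq] at hlt
      exact absurd hlt (not_lt.mpr (hLle i))
    · intro i j hlt
      rw [uUnit_apply]
      rcases eq_or_ne i j with rfl | hne
      · exact absurd hlt (lt_irrefl _)
      rw [if_neg hne, zero_add, if_neg ?_]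
      rintro ⟨hjv, hi1, hi2⟩
      rw [hm i i.isLt, hm j j.isLt, hjv] at hlt
      rw [hMeq i hi1, hMeq (n-1) (by omega)] at hlt
      exact absurd hlt (lt_irrefl _)
  -- H ≤ K
  have hHK : H ≤ K := by
    intro g hg
    refine ⟨hg.1, ?_⟩
    intro i j hlt
    apply hg.2
    rw [hm i i.isLt, hm j j.isLt] at hlt
    rw [hm' i i.isLt, hm' j j.isLt]
    have hi := hMle (i : ℕ)
    have hj := hMle (j : ℕ)
    split_ifs with h1 h2 h2
    · omega
    · exfalso
      have := hMeq i (by omega)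
      omega
    · omega
    · omega
  -- key multiplication formula
  have hmul : ∀ (v : Fin (b-1) → ZMod 2) (g : GL (Fin n) (ZMod 2)) (i j : Fin n),
      ((uUnit n M.sum b v * g : GL (Fin n) (ZMod 2)) : Matrix (Fin n) (Fin n) (ZMod 2)) i j
        = (g : Matrix (Fin n) (Fin n) (ZMod 2)) i j
          + (if (M.sum ≤ (i:ℕ) ∧ (i:ℕ) < n - 1) then
              (if h : (i:ℕ) - M.sum < b - 1 then v ⟨(i:ℕ) - M.sum, h⟩ else 0) else 0)
            * (g : Matrix (Fin n) (Fin n) (ZMod 2)) j₀ j := by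
    intro v g i j
    rw [Units.val_mul, Matrix.mul_apply]
    have hsplit : ∀ k : Fin n, (uUnit n M.sum b v : Matrix (Fin n) (Fin n) (ZMod 2)) i k
        * (g : Matrix (Fin n) (Fin n) (ZMod 2)) k j
        = (if i = k then (g : Matrix (Fin n) (Fin n) (ZMod 2)) k j else 0)
          + (if k = j₀ then (if (M.sum ≤ (i:ℕ) ∧ (i:ℕ) < n - 1) then
              (if h : (i:ℕ) - M.sum < b - 1 then v ⟨(i:ℕ) - M.sum, h⟩ else 0) else 0)
            * (g : Matrix (Fin n) (Fin n) (ZMod 2)) k j else 0) := by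
      intro k
      rw [uUnit_apply, add_mul]
      congr 1
      · split_ifs with hik
        · rw [one_mul]
        · rw [zero_mul]
      · by_cases hk : k = j₀
        · subst hk
          rw [if_pos rfl]
          by_cases hc : (M.sum ≤ (i:ℕ) ∧ (i:ℕ) < n - 1)
          · rw [if_pos ⟨hj₀v, hc.1, hc.2⟩, if_pos hc]
          · rw [if_neg (by rintro ⟨-, h1, h2⟩; exact hc ⟨h1, h2⟩), if_neg hc, zero_mul]
        · have hkv : ¬ ((k : ℕ) = n - 1 ∧ M.sum ≤ (i:ℕ) ∧ (i:ℕ) < n - 1) := by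
            rintro ⟨h1, -, -⟩
            exact hk (Fin.ext (by rw [h1, hj₀v]))
          rw [if_neg hkv, if_neg hk, zero_mul]
    rw [Finset.sum_congr rfl (fun k _ => hsplit k), Finset.sum_add_distrib,
      Finset.sum_ite_eq, Finset.sum_ite_eq']
    simp
  -- entry formula for elements u * h with h ∈ H
  have hentry : ∀ (v : Fin (b-1) → ZMod 2) (h : GL (Fin n) (ZMod 2)), h ∈ H →
      ∀ t : Fin (b - 1),
      ((uUnit n M.sum b v * h : GL (Fin n) (ZMod 2)) : Matrix (Fin n) (Fin n) (ZMod 2))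
        ⟨M.sum + (t:ℕ), by omega⟩ j₀ = v t := by
    intro v h hh t
    have ht := t.isLt
    rw [hmul]
    simp only [Fin.val_mk]
    rw [colH h hh ⟨M.sum + (t:ℕ), by omega⟩ (by simp only [Fin.val_mk]; omega)]
    rw [(row h hh.1).2, mul_one, zero_add]
    rw [if_pos ⟨Nat.le_add_right _ _, by omega⟩, dif_pos (by omega)]
    exact congrArg v (Fin.ext (by simp))
  -- the decomposition map
  set f : (Fin (b-1) → ZMod 2) × H → K := fun p =>
    ⟨uUnit n M.sum b p.1 * (p.2 : GL (Fin n) (ZMod 2)), K.mul_mem (hUK p.1) (hHK p.2.2)⟩ with hf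
  have hinj : Function.Injective f := by
    rintro ⟨v, h, hh⟩ ⟨v', h', hh'⟩ heq
    have heq2 : uUnit n M.sum b v * h = uUnit n M.sum b v' * h' := congrArg Subtype.val heq
    have hvv : v = v' := by
      funext t
      have e1 := hentry v h hh t
      have e2 := hentry v' h' hh' t
      have e3 := congrArg (fun u : GL (Fin n) (ZMod 2) =>
        (u : Matrix (Fin n) (Fin n) (ZMod 2)) ⟨M.sum + (t:ℕ), by omega⟩ j₀) heq2
      exact e1.symm.trans (e3.trans e2)
    subst hvv
    simp only [Prod.mk.injEq]
    exact ⟨trivial, Subtype.ext (mul_left_cancel heq2)⟩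
  have hadd2 : ∀ a : ZMod 2, a + a = 0 := by decide
  have hsurj : Function.Surjective f := by
    rintro ⟨g, hg⟩
    set v : Fin (b-1) → ZMod 2 :=
      fun t => (g : Matrix (Fin n) (Fin n) (ZMod 2)) ⟨M.sum + (t:ℕ), by omega⟩ j₀ with hv
    have huu : uUnit n M.sum b v * uUnit n M.sum b v = 1 := Units.ext (uM_mul_self n M.sum b v)
    have hK2 : uUnit n M.sum b v * g ∈ K := K.mul_mem (hUK v) hg
    have hrow2 := (row g hg.1).2
    have hcol : ∀ i : Fin n, M.sum ≤ (i:ℕ) → (i:ℕ) < n - 1 →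
        ((uUnit n M.sum b v * g : GL (Fin n) (ZMod 2)) :
          Matrix (Fin n) (Fin n) (ZMod 2)) i j₀ = 0 := by
      intro i hi1 hi2
      rw [hmul, if_pos ⟨hi1, hi2⟩, dif_pos (by omega : (i:ℕ) - M.sum < b - 1)]
      simp only [hrow2, mul_one]
      have hval : v ⟨(i:ℕ) - M.sum, by omega⟩
          = (g : Matrix (Fin n) (Fin n) (ZMod 2)) ⟨M.sum + ((i:ℕ) - M.sum), by omega⟩ j₀ := rfl
      have hkey : (⟨M.sum + ((i:ℕ) - M.sum), by omega⟩ : Fin n) = i :=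
        Fin.ext (show M.sum + ((i:ℕ) - M.sum) = (i:ℕ) by omega)
      rw [hval, hkey]
      exact hadd2 _
    have hHmem : uUnit n M.sum b v * g ∈ H := by
      refine ⟨hK2.1, ?_⟩
      intro i j hlt
      rw [hm' i i.isLt, hm' j j.isLt] at hlt
      by_cases hmcase : blockIdx (M ++ [b]) (i:ℕ) < blockIdx (M ++ [b]) (j:ℕ)
      · exact hK2.2 i j hmcase
      · rw [hm i i.isLt, hm j j.isLt] at hmcase
        by_cases h1 : M.sum + (b-1) ≤ (i:ℕ)
        · exfalso
          rw [if_pos h1] at hlt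
          have he1 := hMeq (i:ℕ) (by omega)
          have he2 := hMle (j:ℕ)
          split_ifs at hlt <;> omega
        · rw [if_neg h1, add_zero] at hlt
          by_cases h2 : M.sum + (b-1) ≤ (j:ℕ)
          · rw [if_pos h2] at hlt
            have hjlt := j.isLt
            have hj : (j:ℕ) = n - 1 := by omega
            have hjeq := hMeq (j:ℕ) (by omega)
            have hige : M.length ≤ blockIdx M (i:ℕ) := by omega
            have hiM : M.sum ≤ (i:ℕ) := by
              by_contra hcon
              have := blockIdx_lt M (i:ℕ) (by omega)
              omega
            have hjfin : j = j₀ := Fin.ext (by rw [hj, hj₀v])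
            rw [hjfin]
            exact hcol i hiM (by omega)
          · rw [if_neg h2, add_zero] at hlt
            omega
    refine ⟨(v, ⟨uUnit n M.sum b v * g, hHmem⟩), ?_⟩
    apply Subtype.ext
    show uUnit n M.sum b v * (uUnit n M.sum b v * g) = g
    rw [← mul_assoc, huu, one_mul]
  -- cardinality count
  have hcard : Nat.card K = 2 ^ (b - 1) * Nat.card H := by
    have hc := Nat.card_congr (Equiv.ofBijective f ⟨hinj, hsurj⟩)
    rw [← hc, Nat.card_prod]
    congr 1
    rw [Nat.card_eq_fintype_card]
    simp
  have hpos : 0 < Nat.card H := Nat.card_pos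
  have hrel : (H.subgroupOf K).index * Nat.card (H.subgroupOf K) = Nat.card K :=
    Subgroup.index_mul_card _
  have hcardsub : Nat.card (H.subgroupOf K) = Nat.card H :=
    Nat.card_congr (Subgroup.subgroupOfEquivOfLe hHK).toEquiv
  show (H.subgroupOf K).index = 2 ^ (b - 1)
  apply Nat.eq_of_mul_eq_mul_right hpos
  rw [← hcardsub, hrel, hcard, hcardsub]
end

section
/- Every element of P_{λ|μ} (with μ_m ≤ λ_l) can be written uniquely as a block matrix [[A, 0],[C, B]] where A ∈ P_{λ̃|μ̃} (of size n - μ_m), B ∈ GL_{μ_m}(F_2), and C is a μ_m × (n - μ_m) matrix whose only nonzero columns are among the last λ_l - μ_m columns; i.e., P_{λ|μ} is in bijection with P_{λ̃|μ̃} × GL_{μ_m}(F_2) × M_{μ_m, λ_l - μ_m}(F_2). -/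
open Matrix

open Matrix

lemma sum_take_le (l : List ℕ) (k : ℕ) : (l.take k).sum ≤ l.sum := by
  conv_rhs => rw [← List.take_append_drop k l]
  rw [List.sum_append]; omega

lemma bi_append (l : List ℕ) (x i : ℕ) :
    blockIdx (l ++ [x]) i = blockIdx l i + (if l.sum + x ≤ i then 1 else 0) := by
  unfold blockIdx
  rw [List.length_append, List.length_singleton, List.range_succ, List.countP_append]
  congr 1
  · apply List.countP_congr
    intro k hk
    simp only [List.mem_range] at hk
    rw [List.take_append_of_le_length (by omega)]
  · rw [List.countP_singleton, List.take_of_length_le (by simp), List.sum_append]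
    simp

lemma bi_full (l : List ℕ) (i : ℕ) (h : l.sum ≤ i) : blockIdx l i = l.length := by
  unfold blockIdx
  conv_rhs => rw [← List.length_range (n := l.length)]
  rw [List.countP_eq_length]
  intro k hk
  simp only [decide_eq_true_eq]
  exact le_trans (sum_take_le l _) h

lemma bi_le (l : List ℕ) (i : ℕ) : blockIdx l i ≤ l.length := by
  unfold blockIdx
  calc _ ≤ (List.range l.length).length := List.countP_le_length
    _ = l.length := List.length_range

lemma bi_lt (l : List ℕ) (i : ℕ) (h : i < l.sum) : blockIdx l i < l.length := by
  have hne : l ≠ [] := by rintro rfl; simp at h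
  have hlen : 0 < l.length := List.length_pos_iff.mpr hne
  have hne2 : blockIdx l i ≠ l.length := by
    unfold blockIdx
    conv_rhs => rw [← List.length_range (n := l.length)]
    rw [Ne, List.countP_eq_length]
    intro hall
    have := hall (l.length - 1) (by simp; omega)
    simp only [decide_eq_true_eq] at this
    rw [show l.length - 1 + 1 = l.length by omega, List.take_length] at this
    omega
  have := bi_le l i
  omega

section Aux
variable {F : Type*} [CommRing F]

/-- build the block matrix [[A,0],[Cpad,B]] with C occupying last `a-b` cols of bottom-left -/
def mkMat (n a b c : ℕ) (hcb : c + b = n) (hba : b ≤ a) (han : a ≤ n)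
    (A : Matrix (Fin c) (Fin c) F) (B : Matrix (Fin b) (Fin b) F)
    (C : Matrix (Fin b) (Fin (a - b)) F) : Matrix (Fin n) (Fin n) F :=
  fun i j =>
    if hi : (i : ℕ) < c then
      (if hj : (j : ℕ) < c then A ⟨i, hi⟩ ⟨j, hj⟩ else 0)
    else
      if hj : (j : ℕ) < c then
        (if hj2 : n - a ≤ (j : ℕ) then
          C ⟨(i : ℕ) - c, by have := i.2; omega⟩ ⟨(j : ℕ) - (n - a), by omega⟩
        else 0)
      else B ⟨(i : ℕ) - c, by have := i.2; omega⟩ ⟨(j : ℕ) - c, by have := j.2; omega⟩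

def exA (n c : ℕ) (h : c ≤ n) (Mg : Matrix (Fin n) (Fin n) F) : Matrix (Fin c) (Fin c) F :=
  fun i j => Mg ⟨i, by have := i.2; omega⟩ ⟨j, by have := j.2; omega⟩

def exB (n b c : ℕ) (h : c + b = n) (Mg : Matrix (Fin n) (Fin n) F) :
    Matrix (Fin b) (Fin b) F :=
  fun i j => Mg ⟨c + i, by have := i.2; omega⟩ ⟨c + j, by have := j.2; omega⟩

def exC (n a b c : ℕ) (h : c + b = n) (hba : b ≤ a) (han : a ≤ n)
    (Mg : Matrix (Fin n) (Fin n) F) : Matrix (Fin b) (Fin (a - b)) F :=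
  fun i j => Mg ⟨c + i, by have := i.2; omega⟩ ⟨n - a + j, by have := j.2; omega⟩

variable {n a b c : ℕ} (hcb : c + b = n) (hba : b ≤ a) (han : a ≤ n)

lemma exA_mk (A : Matrix (Fin c) (Fin c) F) (B : Matrix (Fin b) (Fin b) F)
    (C : Matrix (Fin b) (Fin (a - b)) F) :
    exA n c (by omega) (mkMat n a b c hcb hba han A B C) = A := by
  ext i j
  simp only [exA, mkMat]
  rw [dif_pos i.2, dif_pos j.2]

lemma exB_mk (A : Matrix (Fin c) (Fin c) F) (B : Matrix (Fin b) (Fin b) F)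
    (C : Matrix (Fin b) (Fin (a - b)) F) :
    exB n b c hcb (mkMat n a b c hcb hba han A B C) = B := by
  ext i j
  simp only [exB, mkMat]
  rw [dif_neg (by omega), dif_neg (by omega)]
  congr 1 <;> exact Fin.ext (by simp)

lemma exC_mk (A : Matrix (Fin c) (Fin c) F) (B : Matrix (Fin b) (Fin b) F)
    (C : Matrix (Fin b) (Fin (a - b)) F) :
    exC n a b c hcb hba han (mkMat n a b c hcb hba han A B C) = C := by
  ext i j
  have hj := j.2
  simp only [exC, mkMat]
  rw [dif_neg (by omega), dif_pos (by omega), dif_pos (by omega)]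
  congr 1 <;> exact Fin.ext (by simp)

lemma mk_ex (Mg : Matrix (Fin n) (Fin n) F)
    (h1 : ∀ i j : Fin n, (i : ℕ) < c → c ≤ (j : ℕ) → Mg i j = 0)
    (h2 : ∀ i j : Fin n, c ≤ (i : ℕ) → (j : ℕ) < n - a → Mg i j = 0) :
    mkMat n a b c hcb hba han (exA n c (by omega) Mg) (exB n b c hcb Mg)
      (exC n a b c hcb hba han Mg) = Mg := by
  ext i j
  simp only [mkMat, exA, exB, exC]
  split_ifs with hi hj hj hj2
  · congr 1 <;> exact Fin.ext rfl
  · exact (h1 i j hi (by omega)).symm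
  · congr 1 <;> exact Fin.ext (by simp; omega)
  · exact (h2 i j (by omega) (by omega)).symm
  · congr 1 <;> exact Fin.ext (by simp; omega)

lemma det_mkMat (A : Matrix (Fin c) (Fin c) F) (B : Matrix (Fin b) (Fin b) F)
    (C : Matrix (Fin b) (Fin (a - b)) F) :
    (mkMat n a b c hcb hba han A B C).det = A.det * B.det := by
  rw [← Matrix.det_submatrix_equiv_self (finSumFinEquiv.trans (finCongr hcb))]
  have heq : (mkMat n a b c hcb hba han A B C).submatrix
      (finSumFinEquiv.trans (finCongr hcb)) (finSumFinEquiv.trans (finCongr hcb)) =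
      fromBlocks A 0 (fun (i : Fin b) (j : Fin c) => mkMat n a b c hcb hba han A B C
        ⟨c + (i : ℕ), by have := i.2; omega⟩ ⟨(j : ℕ), by have := j.2; omega⟩) B := by
    have SIMP := 0
    ext (i | i) (j | j)
    · simp only [submatrix_apply, Equiv.trans_apply, finSumFinEquiv_apply_left,
        finCongr_apply, Fin.coe_cast, Fin.coe_castAdd, fromBlocks_apply₁₁, mkMat]
      rw [dif_pos i.2, dif_pos j.2]
      rfl
    · simp only [submatrix_apply, Equiv.trans_apply, finSumFinEquiv_apply_left,
        finSumFinEquiv_apply_right, finCongr_apply, Fin.coe_cast, Fin.coe_castAdd,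
        Fin.coe_natAdd, fromBlocks_apply₁₂, mkMat]
      rw [dif_pos i.2, dif_neg (by omega)]
      rfl
    · simp only [submatrix_apply, Equiv.trans_apply, finSumFinEquiv_apply_left,
        finSumFinEquiv_apply_right, finCongr_apply, Fin.coe_cast, Fin.coe_castAdd,
        Fin.coe_natAdd, fromBlocks_apply₂₁]
      congr 1 <;> exact Fin.ext (by simp)
    · simp only [submatrix_apply, Equiv.trans_apply,
        finSumFinEquiv_apply_right, finCongr_apply, Fin.coe_cast,
        Fin.coe_natAdd, fromBlocks_apply₂₂, mkMat]
      rw [dif_neg (by omega), dif_neg (by omega)]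
      congr 1 <;> exact Fin.ext (by simp)
  rw [heq]; exact Matrix.det_fromBlocks_zero₁₂ _ _ _
end Aux

theorem stmt13 (n a b : ℕ) (L M : List ℕ)
    (hL : ∀ x ∈ L ++ [a], 0 < x) (hM : ∀ x ∈ M ++ [b], 0 < x)
    (hLsum : (L ++ [a]).sum = n) (hMsum : (M ++ [b]).sum = n) (hba : b ≤ a) :
    Nonempty ((paraPair n (L ++ [a]) (M ++ [b])) ≃
      (paraPair (n - b) (L ++ [a - b]) M) × GL (Fin b) (ZMod 2) ×
        Matrix (Fin b) (Fin (a - b)) (ZMod 2)) := by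
  have hLsum' : L.sum + a = n := by simpa using hLsum
  have hMsum' : M.sum + b = n := by simpa using hMsum
  have ha0 : 0 < a := hL a (by simp)
  have hb0 : 0 < b := hM b (by simp)
  have han : a ≤ n := by omega
  set c := n - b with hcdef
  have hcb : c + b = n := by omega
  have hcn : c ≤ n := by omega
  have hMs : M.sum = c := by omega
  have hLs : L.sum = n - a := by omega
  -- blockIdx transfers
  have hlam : ∀ i : Fin n, blockIdx (L ++ [a]) (i : ℕ) = blockIdx L (i : ℕ) := fun i => by
    rw [bi_append, if_neg (by have := i.2; omega), add_zero]
  have hmu : ∀ i : Fin n, blockIdx (M ++ [b]) (i : ℕ) = blockIdx M (i : ℕ) := fun i => by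
    rw [bi_append, if_neg (by have := i.2; omega), add_zero]
  have hlam' : ∀ i : Fin c, blockIdx (L ++ [a - b]) (i : ℕ) = blockIdx L (i : ℕ) := fun i => by
    rw [bi_append, if_neg (by have := i.2; omega), add_zero]
  -- zero structure of members
  have htr : ∀ g : paraPair n (L ++ [a]) (M ++ [b]), ∀ i j : Fin n,
      (i : ℕ) < c → c ≤ (j : ℕ) → (g.1 : Matrix (Fin n) (Fin n) (ZMod 2)) i j = 0 := by
    intro g i j hi hj
    obtain ⟨hg1, hg2⟩ := g.2
    refine hg2 i j ?_
    rw [hmu i, hmu j]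
    calc blockIdx M (i : ℕ) < M.length := bi_lt M _ (by omega)
      _ = blockIdx M (j : ℕ) := (bi_full M _ (by omega)).symm
  have hbl : ∀ g : paraPair n (L ++ [a]) (M ++ [b]), ∀ i j : Fin n,
      c ≤ (i : ℕ) → (j : ℕ) < n - a → (g.1 : Matrix (Fin n) (Fin n) (ZMod 2)) i j = 0 := by
    intro g i j hi hj
    obtain ⟨hg1, hg2⟩ := g.2
    refine hg1 i j ?_
    rw [hlam i, hlam j]
    calc blockIdx L (j : ℕ) < L.length := bi_lt L _ (by omega)
      _ = blockIdx L (i : ℕ) := (bi_full L _ (by omega)).symm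
  have hrecon : ∀ g : paraPair n (L ++ [a]) (M ++ [b]),
      mkMat n a b c hcb hba han (exA n c hcn (g.1 : Matrix (Fin n) (Fin n) (ZMod 2)))
        (exB n b c hcb (g.1 : Matrix (Fin n) (Fin n) (ZMod 2)))
        (exC n a b c hcb hba han (g.1 : Matrix (Fin n) (Fin n) (ZMod 2)))
        = (g.1 : Matrix (Fin n) (Fin n) (ZMod 2)) :=
    fun g => mk_ex hcb hba han _ (htr g) (hbl g)
  have hdet : ∀ g : paraPair n (L ++ [a]) (M ++ [b]),
      IsUnit ((exA n c hcn (g.1 : Matrix (Fin n) (Fin n) (ZMod 2))).det) ∧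
      IsUnit ((exB n b c hcb (g.1 : Matrix (Fin n) (Fin n) (ZMod 2))).det) := by
    intro g
    have h1 : IsUnit ((g.1 : Matrix (Fin n) (Fin n) (ZMod 2)).det) :=
      (Matrix.isUnit_iff_isUnit_det _).mp g.1.isUnit
    rw [← hrecon g, det_mkMat] at h1
    exact ⟨isUnit_of_mul_isUnit_left h1, isUnit_of_mul_isUnit_right h1⟩
  have hAunit : ∀ g : paraPair n (L ++ [a]) (M ++ [b]),
      IsUnit (exA n c hcn (g.1 : Matrix (Fin n) (Fin n) (ZMod 2))) := fun g =>
    (Matrix.isUnit_iff_isUnit_det _).mpr (hdet g).1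
  have hBunit : ∀ g : paraPair n (L ++ [a]) (M ++ [b]),
      IsUnit (exB n b c hcb (g.1 : Matrix (Fin n) (Fin n) (ZMod 2))) := fun g =>
    (Matrix.isUnit_iff_isUnit_det _).mpr (hdet g).2
  have hAmem : ∀ g : paraPair n (L ++ [a]) (M ++ [b]),
      (hAunit g).unit ∈ paraPair c (L ++ [a - b]) M := by
    intro g
    obtain ⟨hg1, hg2⟩ := g.2
    constructor
    · intro i j hij
      show ((hAunit g).unit : Matrix (Fin c) (Fin c) (ZMod 2)) i j = 0
      rw [IsUnit.unit_spec]
      show (g.1 : Matrix (Fin n) (Fin n) (ZMod 2)) ⟨i, by omega⟩ ⟨j, by omega⟩ = 0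
      refine hg1 _ _ ?_
      rw [hlam ⟨i, by omega⟩, hlam ⟨j, by omega⟩]
      rw [hlam' i, hlam' j] at hij
      exact hij
    · intro i j hij
      show ((hAunit g).unit : Matrix (Fin c) (Fin c) (ZMod 2)) i j = 0
      rw [IsUnit.unit_spec]
      show (g.1 : Matrix (Fin n) (Fin n) (ZMod 2)) ⟨i, by omega⟩ ⟨j, by omega⟩ = 0
      refine hg2 _ _ ?_
      rw [hmu ⟨i, by omega⟩, hmu ⟨j, by omega⟩]
      exact hij
  -- backward data
  have hNunit : ∀ x : (paraPair c (L ++ [a - b]) M) × GL (Fin b) (ZMod 2) ×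
      Matrix (Fin b) (Fin (a - b)) (ZMod 2),
      IsUnit (mkMat n a b c hcb hba han
        (x.1.1 : Matrix (Fin c) (Fin c) (ZMod 2))
        (x.2.1 : Matrix (Fin b) (Fin b) (ZMod 2)) x.2.2) := by
    intro x
    rw [Matrix.isUnit_iff_isUnit_det, det_mkMat]
    exact IsUnit.mul ((Matrix.isUnit_iff_isUnit_det _).mp x.1.1.isUnit)
      ((Matrix.isUnit_iff_isUnit_det _).mp x.2.1.isUnit)
  have hNmem : ∀ x : (paraPair c (L ++ [a - b]) M) × GL (Fin b) (ZMod 2) ×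
      Matrix (Fin b) (Fin (a - b)) (ZMod 2),
      (hNunit x).unit ∈ paraPair n (L ++ [a]) (M ++ [b]) := by
    intro x
    obtain ⟨hx1, hx2⟩ := x.1.2
    constructor
    · intro i j hij
      show ((hNunit x).unit : Matrix (Fin n) (Fin n) (ZMod 2)) i j = 0
      rw [IsUnit.unit_spec]
      rw [hlam i, hlam j] at hij
      by_cases hi : (i : ℕ) < c
      · by_cases hj : (j : ℕ) < c
        · show mkMat n a b c hcb hba han _ _ _ i j = 0
          rw [mkMat, dif_pos hi, dif_pos hj]
          refine hx1 ⟨i, hi⟩ ⟨j, hj⟩ ?_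
          rw [hlam' ⟨i, hi⟩, hlam' ⟨j, hj⟩]
          exact hij
        · show mkMat n a b c hcb hba han _ _ _ i j = 0
          rw [mkMat, dif_pos hi, dif_neg hj]
      · by_cases hj : (j : ℕ) < c
        · by_cases hj2 : n - a ≤ (j : ℕ)
          · exfalso
            have e1 : blockIdx L (j : ℕ) = L.length := bi_full L _ (by omega)
            have e2 : blockIdx L (i : ℕ) ≤ L.length := bi_le L _
            omega
          · show mkMat n a b c hcb hba han _ _ _ i j = 0
            rw [mkMat, dif_neg hi, dif_pos hj, dif_neg hj2]
        · exfalso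
          have e1 : blockIdx L (j : ℕ) = L.length := bi_full L _ (by omega)
          have e2 : blockIdx L (i : ℕ) ≤ L.length := bi_le L _
          omega
    · intro i j hij
      show ((hNunit x).unit : Matrix (Fin n) (Fin n) (ZMod 2)) i j = 0
      rw [IsUnit.unit_spec]
      rw [hmu i, hmu j] at hij
      by_cases hi : (i : ℕ) < c
      · by_cases hj : (j : ℕ) < c
        · show mkMat n a b c hcb hba han _ _ _ i j = 0
          rw [mkMat, dif_pos hi, dif_pos hj]
          refine hx2 ⟨i, hi⟩ ⟨j, hj⟩ hij
        · show mkMat n a b c hcb hba han _ _ _ i j = 0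
          rw [mkMat, dif_pos hi, dif_neg hj]
      · exfalso
        have e1 : blockIdx M (i : ℕ) = M.length := bi_full M _ (by omega)
        have e2 : blockIdx M (j : ℕ) ≤ M.length := bi_le M _
        omega
  refine ⟨{
    toFun := fun g => (⟨(hAunit g).unit, hAmem g⟩, (hBunit g).unit,
      exC n a b c hcb hba han (g.1 : Matrix (Fin n) (Fin n) (ZMod 2))),
    invFun := fun x => ⟨(hNunit x).unit, hNmem x⟩,
    left_inv := ?_, right_inv := ?_ }⟩
  · intro g
    apply Subtype.ext
    apply Units.ext
    show (mkMat n a b c hcb hba han _ _ _ : Matrix (Fin n) (Fin n) (ZMod 2)) = _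
    rw [IsUnit.unit_spec, IsUnit.unit_spec]
    exact hrecon g
  · rintro ⟨⟨Au, hAu⟩, Bu, C⟩
    refine Prod.ext (Subtype.ext (Units.ext ?_)) (Prod.ext (Units.ext ?_) ?_)
    · simp only [IsUnit.unit_spec]
      exact exA_mk hcb hba han _ _ _
    · simp only [IsUnit.unit_spec]
      exact exB_mk hcb hba han _ _ _
    · simp only [IsUnit.unit_spec]
      exact exC_mk hcb hba han _ _ _
end

section
/- The subgroup P_{λ|μ} of GL_{n+1}(F_2) is generated by the set of transvections {x_j = I + E_{j+1,j} : j ∉ s̄(λ)} ∪ {y_j = I + E_{j,j+1} : j ∉ s̄(μ)}, where s̄(λ) denotes the stopover set {λ_1, λ_1+λ_2, ..., λ_1+⋯+λ_{l-1}}. -/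
open Matrix

open Matrix

namespace Stmt16

lemma zmod2_add_self : ∀ a : ZMod 2, a + a = 0 := by decide
lemma zmod2_eq_one : ∀ a : ZMod 2, a ≠ 0 → a = 1 := by decide
lemma zmod2_eq_zero : ∀ a : ZMod 2, a ≠ 1 → a = 0 := by decide

lemma mat_add_self {N : Type*} [Fintype N] (M : Matrix N N (ZMod 2)) : M + M = 0 := by
  ext i j
  simp only [Matrix.add_apply, Matrix.zero_apply, zmod2_add_self]

lemma blockIdx_mono (l : List ℕ) {i i' : ℕ} (h : i ≤ i') : blockIdx l i ≤ blockIdx l i' := by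
  apply List.countP_mono_left
  intro k _ hk
  simp only [decide_eq_true_eq] at *
  omega

lemma lt_of_blockIdx_lt (l : List ℕ) {i i' : ℕ} (h : blockIdx l i < blockIdx l i') : i < i' := by
  by_contra hc
  exact absurd (blockIdx_mono l (by omega : i' ≤ i)) (by omega)

lemma countP_lt {α : Type*} (p q : α → Bool) :
    ∀ L : List α, (∀ x ∈ L, p x = true → q x = true) →
    ∀ a ∈ L, ¬ p a = true → q a = true → L.countP p < L.countP q := by
  intro L
  induction L with
  | nil => intro _ a ha; cases ha
  | cons b t ih =>
    intro hpq a ha hpa hqa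
    rw [List.countP_cons, List.countP_cons]
    rcases List.mem_cons.mp ha with rfl | hat
    · have h1 : t.countP p ≤ t.countP q :=
        List.countP_mono_left (fun x hx => hpq x (List.mem_cons_of_mem _ hx))
      simp only [hpa, hqa, if_true, if_false, Bool.false_eq_true]
      omega
    · have h1 := ih (fun x hx => hpq x (List.mem_cons_of_mem _ hx)) a hat hpa hqa
      have h2 : (if p b = true then 1 else 0) ≤ (if q b = true then 1 else 0) := by
        by_cases hb : p b = true
        · simp [hb, hpq b (List.mem_cons_self) hb]
        · simp [hb]
      omega

lemma blockIdx_eq_succ_iff (l : List ℕ) (N : ℕ) (hlsum : l.sum = N + 1) (j : ℕ) (hj : j < N) :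
    blockIdx l j = blockIdx l (j + 1) ↔ (j + 1) ∉ stopovers l := by
  constructor
  · intro heq hst
    obtain ⟨t, ht0, htlen, hsum⟩ := hst
    have hlt : blockIdx l j < blockIdx l (j + 1) := by
      refine countP_lt _ _ _ ?_ (t - 1) ?_ ?_ ?_
      · intro x _ hx
        simp only [decide_eq_true_eq] at *
        omega
      · exact List.mem_range.mpr (by omega)
      · simp only [decide_eq_true_eq]
        have h1 : t - 1 + 1 = t := by omega
        rw [h1, hsum]; omega
      · simp only [decide_eq_true_eq]
        have h1 : t - 1 + 1 = t := by omega
        rw [h1, hsum]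
    omega
  · intro hst
    refine le_antisymm (blockIdx_mono l (by omega)) ?_
    apply List.countP_mono_left
    intro k hk hk1
    simp only [decide_eq_true_eq, List.mem_range] at *
    by_contra hc
    have hsum' : (l.take (k + 1)).sum = j + 1 := by omega
    rcases Nat.lt_or_ge (k + 1) l.length with h | h
    · exact hst ⟨k + 1, by omega, h, hsum'⟩
    · rw [List.take_of_length_le h] at hsum'
      omega


lemma tvsq {N : ℕ} (a b : Fin N) (hab : a ≠ b) :
    (1 + Matrix.single a b (1 : ZMod 2)) * (1 + Matrix.single a b 1) = 1 := by
  have h0 : Matrix.single a b (1 : ZMod 2) * Matrix.single a b 1 = 0 :=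
    Matrix.single_mul_single_of_ne 1 a b a (Ne.symm hab) 1
  rw [mul_add, mul_one, add_mul, one_mul, h0, add_zero, add_assoc, mat_add_self, add_zero]

/-- The transvection as a unit. -/
def TV (N : ℕ) (a b : Fin N) (hab : a ≠ b) : GL (Fin N) (ZMod 2) :=
  ⟨1 + Matrix.single a b 1, 1 + Matrix.single a b 1, tvsq a b hab, tvsq a b hab⟩

lemma left_apply {N : ℕ} (i j : Fin N) (M : Matrix (Fin N) (Fin N) (ZMod 2)) (a b : Fin N) :
    ((1 + Matrix.single i j (1 : ZMod 2)) * M) a b = M a b + if a = i then M j b else 0 := by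
  rw [add_mul, one_mul, Matrix.add_apply]
  congr 1
  by_cases h : a = i
  · subst h
    rw [Matrix.single_mul_apply_same, one_mul, if_pos rfl]
  · rw [Matrix.single_mul_apply_of_ne _ _ _ _ _ h _, if_neg h]

lemma right_apply {N : ℕ} (i j : Fin N) (M : Matrix (Fin N) (Fin N) (ZMod 2)) (a b : Fin N) :
    (M * (1 + Matrix.single i j (1 : ZMod 2))) a b = M a b + if b = j then M a i else 0 := by
  rw [mul_add, mul_one, Matrix.add_apply]
  congr 1
  by_cases h : b = j
  · subst h
    rw [Matrix.mul_single_apply_same, mul_one, if_pos rfl]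
  · rw [Matrix.mul_single_apply_of_ne _ _ _ _ _ h _, if_neg h]

lemma four_mul {N : ℕ} (a b c : Fin N) (hba : b ≠ a) (hca : c ≠ a) (hbc : b ≠ c) :
    ((1 + Matrix.single a c (1 : ZMod 2)) * (1 + Matrix.single c b 1)) *
      ((1 + Matrix.single a c 1) * (1 + Matrix.single c b 1)) = 1 + Matrix.single a b 1 := by
  set A := Matrix.single a c (1 : ZMod 2) with hA
  set B := Matrix.single c b (1 : ZMod 2) with hB
  set C := Matrix.single a b (1 : ZMod 2) with hC
  have hAB : A * B = C := by
    rw [hA, hB, hC, Matrix.single_mul_single_same, one_mul]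
  have hAA : A * A = 0 := Matrix.single_mul_single_of_ne _ _ _ _ hca 1
  have hBB : B * B = 0 := Matrix.single_mul_single_of_ne _ _ _ _ hbc 1
  have hBA : B * A = 0 := Matrix.single_mul_single_of_ne _ _ _ _ hba 1
  have hAC : A * C = 0 := Matrix.single_mul_single_of_ne _ _ _ _ hca 1
  have hBC : B * C = 0 := Matrix.single_mul_single_of_ne _ _ _ _ hba 1
  have hCA : C * A = 0 := Matrix.single_mul_single_of_ne _ _ _ _ hba 1
  have hCB : C * B = 0 := Matrix.single_mul_single_of_ne _ _ _ _ hbc 1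
  have e1 : (1 + A) * (1 + B) = 1 + A + B + C := by
    rw [mul_add, mul_one, add_mul, one_mul, hAB]
    abel
  have hCC : C * C = 0 := Matrix.single_mul_single_of_ne _ _ _ _ hba 1
  have s2 : ∀ M : Matrix (Fin N) (Fin N) (ZMod 2), (2 : ℕ) • M = 0 := fun M => by
    rw [two_smul, mat_add_self]
  have s3 : (3 : ℕ) • C = C := by
    rw [show (3 : ℕ) = 2 + 1 from rfl, add_smul, s2, one_smul, zero_add]
  rw [e1]
  simp only [mul_add, add_mul, one_mul, mul_one, hAA, hBB, hBA, hAB, hAC, hBC, hCA, hCB,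
    add_zero, zero_add]
  have s2' : ∀ M : Matrix (Fin N) (Fin N) (ZMod 2), (2 : ℤ) • M = 0 := fun M => by
    rw [two_smul, mat_add_self]
  have s3' : (3 : ℤ) • C = C := by
    rw [show (3 : ℤ) = 2 + 1 from rfl, add_smul, s2', one_smul, zero_add]
  abel_nf
  simp only [hCC, add_zero, s2, s2', s3, s3', zero_add]


variable (n : ℕ) (l m : List ℕ)

def genSet : Set (GL (Fin (n + 1)) (ZMod 2)) :=
  {u : GL (Fin (n + 1)) (ZMod 2) |
    ∃ j : Fin n,
      (((j : ℕ) + 1) ∉ stopovers l ∧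
        (u : Matrix (Fin (n + 1)) (Fin (n + 1)) (ZMod 2)) = xM n j) ∨
      (((j : ℕ) + 1) ∉ stopovers m ∧
        (u : Matrix (Fin (n + 1)) (Fin (n + 1)) (ZMod 2)) = yM n j)}

lemma gen_adj_lower (hlsum : l.sum = n + 1) (a b : Fin (n + 1))
    (h : (a : ℕ) = (b : ℕ) + 1) (hbl : blockIdx l (a : ℕ) = blockIdx l (b : ℕ))
    (hne : a ≠ b) : TV (n + 1) a b hne ∈ Subgroup.closure (genSet n l m) := by
  have hb : (b : ℕ) < n := by have := a.isLt; omega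
  apply Subgroup.subset_closure
  refine ⟨⟨(b : ℕ), hb⟩, Or.inl ⟨?_, ?_⟩⟩
  · refine (blockIdx_eq_succ_iff l n hlsum (b : ℕ) hb).mp ?_
    rw [h] at hbl
    exact hbl.symm
  · show (1 + Matrix.single a b 1 : Matrix (Fin (n + 1)) (Fin (n + 1)) (ZMod 2)) = xM n _
    have ha : a = Fin.succ ⟨(b : ℕ), hb⟩ := Fin.ext (by simp [h])
    have hb' : b = Fin.castSucc ⟨(b : ℕ), hb⟩ := Fin.ext rfl
    rw [xM, ← ha, ← hb']

lemma gen_adj_upper (hmsum : m.sum = n + 1) (a b : Fin (n + 1))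
    (h : (b : ℕ) = (a : ℕ) + 1) (hbm : blockIdx m (a : ℕ) = blockIdx m (b : ℕ))
    (hne : a ≠ b) : TV (n + 1) a b hne ∈ Subgroup.closure (genSet n l m) := by
  have ha : (a : ℕ) < n := by have := b.isLt; omega
  apply Subgroup.subset_closure
  refine ⟨⟨(a : ℕ), ha⟩, Or.inr ⟨?_, ?_⟩⟩
  · refine (blockIdx_eq_succ_iff m n hmsum (a : ℕ) ha).mp ?_
    rw [h] at hbm
    exact hbm
  · show (1 + Matrix.single a b 1 : Matrix (Fin (n + 1)) (Fin (n + 1)) (ZMod 2)) = yM n _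
    have hb' : b = Fin.succ ⟨(a : ℕ), ha⟩ := Fin.ext (by simp [h])
    have ha' : a = Fin.castSucc ⟨(a : ℕ), ha⟩ := Fin.ext rfl
    rw [yM, ← hb', ← ha']

lemma gen_lower (hlsum : l.sum = n + 1) :
    ∀ (d : ℕ) (a b : Fin (n + 1)), (a : ℕ) = (b : ℕ) + (d + 1) →
      blockIdx l (a : ℕ) = blockIdx l (b : ℕ) →
      ∀ hne : a ≠ b, TV (n + 1) a b hne ∈ Subgroup.closure (genSet n l m) := by
  intro d
  induction d with
  | zero =>
    intro a b h hbl hne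
    exact gen_adj_lower n l m hlsum a b h hbl hne
  | succ d ih =>
    intro a b h hbl hne
    have hc : (b : ℕ) + 1 < n + 1 := by have := a.isLt; omega
    set c : Fin (n + 1) := ⟨(b : ℕ) + 1, hc⟩ with hcdef
    have hcv : (c : ℕ) = (b : ℕ) + 1 := rfl
    have hbc : blockIdx l (c : ℕ) = blockIdx l (b : ℕ) := by
      have h1 := blockIdx_mono l (show (b : ℕ) ≤ (c : ℕ) by omega)
      have h2 := blockIdx_mono l (show (c : ℕ) ≤ (a : ℕ) by omega)
      omega
    have hac : blockIdx l (a : ℕ) = blockIdx l (c : ℕ) := by omega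
    have hneac : a ≠ c := fun hx => by rw [hx, hcv] at h; omega
    have hnecb : c ≠ b := fun hx => by rw [Fin.ext_iff, hcv] at hx; omega
    have h1 := ih a c (by omega) hac hneac
    have h2 := gen_adj_lower n l m hlsum c b hcv hbc hnecb
    have key : TV (n + 1) a b hne =
        (TV (n + 1) a c hneac * TV (n + 1) c b hnecb) *
          (TV (n + 1) a c hneac * TV (n + 1) c b hnecb) := by
      apply Units.ext
      have hba : b ≠ a := fun hx => hne hx.symm
      have hca : c ≠ a := fun hx => hneac hx.symm
      have hbcne : b ≠ c := fun hx => hnecb hx.symm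
      exact (four_mul a b c hba hca hbcne).symm
    rw [key]
    exact mul_mem (mul_mem h1 h2) (mul_mem h1 h2)

lemma gen_upper (hmsum : m.sum = n + 1) :
    ∀ (d : ℕ) (a b : Fin (n + 1)), (b : ℕ) = (a : ℕ) + (d + 1) →
      blockIdx m (a : ℕ) = blockIdx m (b : ℕ) →
      ∀ hne : a ≠ b, TV (n + 1) a b hne ∈ Subgroup.closure (genSet n l m) := by
  intro d
  induction d with
  | zero =>
    intro a b h hbm hne
    exact gen_adj_upper n l m hmsum a b h hbm hne
  | succ d ih =>
    intro a b h hbm hne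
    have hc : (a : ℕ) + 1 < n + 1 := by have := b.isLt; omega
    set c : Fin (n + 1) := ⟨(a : ℕ) + 1, hc⟩ with hcdef
    have hcv : (c : ℕ) = (a : ℕ) + 1 := rfl
    have hacb : blockIdx m (a : ℕ) = blockIdx m (c : ℕ) := by
      have h1 := blockIdx_mono m (show (a : ℕ) ≤ (c : ℕ) by omega)
      have h2 := blockIdx_mono m (show (c : ℕ) ≤ (b : ℕ) by omega)
      omega
    have hcb : blockIdx m (c : ℕ) = blockIdx m (b : ℕ) := by omega
    have hneac : a ≠ c := fun hx => by rw [Fin.ext_iff, hcv] at hx; omega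
    have hnecb : c ≠ b := fun hx => by rw [← hx, hcv] at h; omega
    have h1 := gen_adj_upper n l m hmsum a c hcv hacb hneac
    have h2 := ih c b (by omega) hcb hnecb
    have key : TV (n + 1) a b hne =
        (TV (n + 1) a c hneac * TV (n + 1) c b hnecb) *
          (TV (n + 1) a c hneac * TV (n + 1) c b hnecb) := by
      apply Units.ext
      have hba : b ≠ a := fun hx => hne hx.symm
      have hca : c ≠ a := fun hx => hneac hx.symm
      have hbcne : b ≠ c := fun hx => hnecb hx.symm
      exact (four_mul a b c hba hca hbcne).symm
    rw [key]
    exact mul_mem (mul_mem h1 h2) (mul_mem h1 h2)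


lemma lower_mem (g : GL (Fin (n + 1)) (ZMod 2)) (a b : Fin (n + 1)) (hba : (b : ℕ) < (a : ℕ))
    (hbl : blockIdx l (a : ℕ) = blockIdx l (b : ℕ))
    (hval : (g : Matrix (Fin (n + 1)) (Fin (n + 1)) (ZMod 2)) = 1 + Matrix.single a b 1) :
    g ∈ paraPair (n + 1) l m := by
  refine ⟨fun i j hij => ?_, fun i j hij => ?_⟩
  · have hji : (j : ℕ) < (i : ℕ) := lt_of_blockIdx_lt l hij
    have hne : i ≠ j := fun hx => by rw [hx] at hji; omega
    have h2 : ¬(a = i ∧ b = j) := by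
      rintro ⟨rfl, rfl⟩
      omega
    rw [hval, Matrix.add_apply, Matrix.one_apply_ne hne,
      Matrix.single_apply_of_ne _ _ _ _ _ h2, add_zero]
  · have hji : (i : ℕ) < (j : ℕ) := lt_of_blockIdx_lt m hij
    have hne : i ≠ j := fun hx => by rw [hx] at hji; omega
    have h2 : ¬(a = i ∧ b = j) := by
      rintro ⟨rfl, rfl⟩
      omega
    rw [hval, Matrix.add_apply, Matrix.one_apply_ne hne,
      Matrix.single_apply_of_ne _ _ _ _ _ h2, add_zero]

lemma upper_mem (g : GL (Fin (n + 1)) (ZMod 2)) (a b : Fin (n + 1)) (hab : (a : ℕ) < (b : ℕ))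
    (hbm : blockIdx m (a : ℕ) = blockIdx m (b : ℕ))
    (hval : (g : Matrix (Fin (n + 1)) (Fin (n + 1)) (ZMod 2)) = 1 + Matrix.single a b 1) :
    g ∈ paraPair (n + 1) l m := by
  refine ⟨fun i j hij => ?_, fun i j hij => ?_⟩
  · have hji : (j : ℕ) < (i : ℕ) := lt_of_blockIdx_lt l hij
    have hne : i ≠ j := fun hx => by rw [hx] at hji; omega
    have h2 : ¬(a = i ∧ b = j) := by
      rintro ⟨rfl, rfl⟩
      omega
    rw [hval, Matrix.add_apply, Matrix.one_apply_ne hne,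
      Matrix.single_apply_of_ne _ _ _ _ _ h2, add_zero]
  · have hji : (i : ℕ) < (j : ℕ) := lt_of_blockIdx_lt m hij
    have hne : i ≠ j := fun hx => by rw [hx] at hji; omega
    have h2 : ¬(a = i ∧ b = j) := by
      rintro ⟨rfl, rfl⟩
      omega
    rw [hval, Matrix.add_apply, Matrix.one_apply_ne hne,
      Matrix.single_apply_of_ne _ _ _ _ _ h2, add_zero]

/-- `g` agrees with the identity on the first `k` rows and columns. -/
def Ident (k : ℕ) (g : GL (Fin (n + 1)) (ZMod 2)) : Prop :=
  ∀ i j : Fin (n + 1), ((i : ℕ) < k ∨ (j : ℕ) < k) →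
    (g : Matrix (Fin (n + 1)) (Fin (n + 1)) (ZMod 2)) i j = if i = j then 1 else 0

def badSet (k : ℕ) (g : GL (Fin (n + 1)) (ZMod 2)) : Finset (Fin (n + 1) × Fin (n + 1)) :=
  Finset.univ.filter (fun p =>
    (((p.1 : ℕ) = k ∧ k < (p.2 : ℕ)) ∨ ((p.2 : ℕ) = k ∧ k < (p.1 : ℕ))) ∧
      (g : Matrix (Fin (n + 1)) (Fin (n + 1)) (ZMod 2)) p.1 p.2 ≠ 0)


lemma inner_done (k : ℕ) (hk : k < n + 1)
    (g : GL (Fin (n + 1)) (ZMod 2)) (hId : Ident n k g)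
    (hpiv : (g : Matrix (Fin (n + 1)) (Fin (n + 1)) (ZMod 2)) ⟨k, hk⟩ ⟨k, hk⟩ = 1)
    (hempty : badSet n k g = ∅) : Ident n (k + 1) g := by
  have hnb : ∀ p : Fin (n + 1) × Fin (n + 1), p ∉ badSet n k g := by
    rw [hempty]; exact fun p => Finset.notMem_empty p
  intro i j hij
  by_cases h0 : (i : ℕ) < k ∨ (j : ℕ) < k
  · exact hId i j h0
  push_neg at h0
  by_cases hij' : i = j
  · subst hij'
    have hi : i = ⟨k, hk⟩ := Fin.ext (show (i : ℕ) = k by omega)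
    rw [if_pos rfl, hi, hpiv]
  · rw [if_neg hij']
    by_contra hne0
    apply hnb (i, j)
    rw [badSet, Finset.mem_filter]
    refine ⟨Finset.mem_univ _, ?_, hne0⟩
    have hvne : (i : ℕ) ≠ (j : ℕ) := fun hE => hij' (Fin.ext hE)
    show ((i : ℕ) = k ∧ k < (j : ℕ)) ∨ ((j : ℕ) = k ∧ k < (i : ℕ))
    omega

lemma inner (hlsum : l.sum = n + 1) (hmsum : m.sum = n + 1) (k : ℕ) (hk : k < n + 1)
    (IH : ∀ g : GL (Fin (n + 1)) (ZMod 2), g ∈ paraPair (n + 1) l m → Ident n (k + 1) g →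
      g ∈ Subgroup.closure (genSet n l m)) :
    ∀ c : ℕ, ∀ g : GL (Fin (n + 1)) (ZMod 2), g ∈ paraPair (n + 1) l m → Ident n k g →
      (g : Matrix (Fin (n + 1)) (Fin (n + 1)) (ZMod 2)) ⟨k, hk⟩ ⟨k, hk⟩ = 1 →
      (badSet n k g).card ≤ c → g ∈ Subgroup.closure (genSet n l m) := by
  intro c
  induction c with
  | zero =>
    intro g hg hId hpiv hcard
    exact IH g hg (inner_done n k hk g hId hpiv (Finset.card_eq_zero.mp (by omega)))
  | succ c ihc =>
    intro g hg hId hpiv hcard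
    by_cases hz : badSet n k g = ∅
    · exact IH g hg (inner_done n k hk g hId hpiv hz)
    obtain ⟨p, hpmem⟩ := Finset.nonempty_iff_ne_empty.mpr hz
    set kf : Fin (n + 1) := ⟨k, hk⟩ with hkf
    have hp := hpmem
    rw [badSet, Finset.mem_filter] at hp
    obtain ⟨-, hcond, hne0⟩ := hp
    rcases hcond with ⟨h1, h2⟩ | ⟨h1, h2⟩
    · -- row entry (kf, j0), clear by column operation g' = g * TV kf j0
      set j0 := p.2 with hj0def
      have hp1 : p.1 = kf := Fin.ext h1
      have hne0' : (g : Matrix (Fin (n + 1)) (Fin (n + 1)) (ZMod 2)) kf j0 ≠ 0 := by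
        rw [← hp1]; exact hne0
      have hble : blockIdx m (j0 : ℕ) = blockIdx m k := by
        have hmon := blockIdx_mono m (le_of_lt h2)
        have hkv : blockIdx m (kf : ℕ) = blockIdx m k := rfl
        by_contra hne
        exact hne0' (hg.2 kf j0 (by omega))
      have hnejk : kf ≠ j0 := fun hx => by
        have := congrArg Fin.val hx
        simp only [hkf] at this
        omega
      have ht : TV (n + 1) kf j0 hnejk ∈ Subgroup.closure (genSet n l m) :=
        gen_upper n l m hmsum ((j0 : ℕ) - k - 1) kf j0 (by omega) hble.symm hnejk
      have htp : TV (n + 1) kf j0 hnejk ∈ paraPair (n + 1) l m :=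
        upper_mem n l m _ kf j0 (by omega) hble.symm rfl
      set g' := g * TV (n + 1) kf j0 hnejk with hg'def
      have key : ∀ a b : Fin (n + 1),
          (g' : Matrix (Fin (n + 1)) (Fin (n + 1)) (ZMod 2)) a b =
            (g : Matrix (Fin (n + 1)) (Fin (n + 1)) (ZMod 2)) a b +
              if b = j0 then (g : Matrix (Fin (n + 1)) (Fin (n + 1)) (ZMod 2)) a kf else 0 := by
        intro a b
        exact right_apply kf j0 (g : Matrix (Fin (n + 1)) (Fin (n + 1)) (ZMod 2)) a b
      have hg'mem : g' ∈ paraPair (n + 1) l m := mul_mem hg htp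
      have hId' : Ident n k g' := by
        intro a b hab
        rw [key]
        rcases hab with ha | hb
        · by_cases hbj : b = j0
          · have hakf : a ≠ kf := fun hx => by
              have := congrArg Fin.val hx; simp only [hkf] at this; omega
            rw [if_pos hbj, hId a kf (Or.inl ha), if_neg hakf, add_zero]
            exact hId a b (Or.inl ha)
          · rw [if_neg hbj, add_zero]
            exact hId a b (Or.inl ha)
        · have hbj : b ≠ j0 := fun hx => by
            have := congrArg Fin.val hx; omega
          rw [if_neg hbj, add_zero]
          exact hId a b (Or.inr hb)
      have hpiv' : (g' : Matrix (Fin (n + 1)) (Fin (n + 1)) (ZMod 2)) kf kf = 1 := by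
        rw [key, if_neg hnejk, add_zero]
        exact hpiv
      have hsub : badSet n k g' ⊆ (badSet n k g).erase p := by
        intro q hq
        rw [badSet, Finset.mem_filter] at hq
        obtain ⟨-, hqc, hqne⟩ := hq
        rw [Finset.mem_erase]
        by_cases hq2 : q.2 = j0
        · exfalso
          have hq1 : (q.1 : ℕ) = k := by
            rcases hqc with ⟨h, _⟩ | ⟨h, _⟩
            · exact h
            · have := congrArg Fin.val hq2; omega
          have hq1' : q.1 = kf := Fin.ext hq1
          apply hqne
          have e1 : (g' : Matrix (Fin (n + 1)) (Fin (n + 1)) (ZMod 2)) q.1 q.2 =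
              (g : Matrix (Fin (n + 1)) (Fin (n + 1)) (ZMod 2)) kf j0 +
                (g : Matrix (Fin (n + 1)) (Fin (n + 1)) (ZMod 2)) kf kf := by
            rw [key, if_pos hq2, hq1', hq2]
          rw [e1, hpiv, zmod2_eq_one _ hne0']
          exact zmod2_add_self 1
        · refine ⟨fun hqp => hq2 (by rw [hqp]), ?_⟩
          rw [badSet, Finset.mem_filter]
          refine ⟨Finset.mem_univ _, hqc, ?_⟩
          rw [key, if_neg hq2, add_zero] at hqne
          exact hqne
      have hcard' : (badSet n k g').card ≤ c := by
        have hc1 := Finset.card_le_card hsub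
        rw [Finset.card_erase_of_mem hpmem] at hc1
        have hc2 : 0 < (badSet n k g).card := Finset.card_pos.mpr ⟨p, hpmem⟩
        omega
      have hg'H := ihc g' hg'mem hId' hpiv' hcard'
      have hfin : g = g' * (TV (n + 1) kf j0 hnejk)⁻¹ := by
        rw [hg'def, mul_inv_cancel_right]
      rw [hfin]
      exact mul_mem hg'H (inv_mem ht)
    · -- column entry (i0, kf), clear by row operation g' = TV i0 kf * g
      set i0 := p.1 with hi0def
      have hp2 : p.2 = kf := Fin.ext h1
      have hne0' : (g : Matrix (Fin (n + 1)) (Fin (n + 1)) (ZMod 2)) i0 kf ≠ 0 := by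
        rw [← hp2]; exact hne0
      have hble : blockIdx l (i0 : ℕ) = blockIdx l k := by
        have hmon := blockIdx_mono l (le_of_lt h2)
        have hkv : blockIdx l (kf : ℕ) = blockIdx l k := rfl
        by_contra hne
        exact hne0' (hg.1 i0 kf (by omega))
      have hneik : i0 ≠ kf := fun hx => by
        have := congrArg Fin.val hx
        simp only [hkf] at this
        omega
      have ht : TV (n + 1) i0 kf hneik ∈ Subgroup.closure (genSet n l m) :=
        gen_lower n l m hlsum ((i0 : ℕ) - k - 1) i0 kf (by omega) hble hneik
      have htp : TV (n + 1) i0 kf hneik ∈ paraPair (n + 1) l m :=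
        lower_mem n l m _ i0 kf (by omega) hble rfl
      set g' := TV (n + 1) i0 kf hneik * g with hg'def
      have key : ∀ a b : Fin (n + 1),
          (g' : Matrix (Fin (n + 1)) (Fin (n + 1)) (ZMod 2)) a b =
            (g : Matrix (Fin (n + 1)) (Fin (n + 1)) (ZMod 2)) a b +
              if a = i0 then (g : Matrix (Fin (n + 1)) (Fin (n + 1)) (ZMod 2)) kf b else 0 := by
        intro a b
        exact left_apply i0 kf (g : Matrix (Fin (n + 1)) (Fin (n + 1)) (ZMod 2)) a b
      have hg'mem : g' ∈ paraPair (n + 1) l m := mul_mem htp hg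
      have hId' : Ident n k g' := by
        intro a b hab
        rw [key]
        rcases hab with ha | hb
        · have hai : a ≠ i0 := fun hx => by
            have := congrArg Fin.val hx; omega
          rw [if_neg hai, add_zero]
          exact hId a b (Or.inl ha)
        · by_cases hai : a = i0
          · have hkb : kf ≠ b := fun hx => by
              have := congrArg Fin.val hx; simp only [hkf] at this; omega
            rw [if_pos hai, hId kf b (Or.inr hb), if_neg hkb, add_zero]
            exact hId a b (Or.inr hb)
          · rw [if_neg hai, add_zero]
            exact hId a b (Or.inr hb)
      have hpiv' : (g' : Matrix (Fin (n + 1)) (Fin (n + 1)) (ZMod 2)) kf kf = 1 := by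
        rw [key, if_neg (fun hx => hneik hx.symm), add_zero]
        exact hpiv
      have hsub : badSet n k g' ⊆ (badSet n k g).erase p := by
        intro q hq
        rw [badSet, Finset.mem_filter] at hq
        obtain ⟨-, hqc, hqne⟩ := hq
        rw [Finset.mem_erase]
        by_cases hq1 : q.1 = i0
        · exfalso
          have hq2 : (q.2 : ℕ) = k := by
            rcases hqc with ⟨h, _⟩ | ⟨h, _⟩
            · have := congrArg Fin.val hq1; omega
            · exact h
          have hq2' : q.2 = kf := Fin.ext hq2
          apply hqne
          have e1 : (g' : Matrix (Fin (n + 1)) (Fin (n + 1)) (ZMod 2)) q.1 q.2 =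
              (g : Matrix (Fin (n + 1)) (Fin (n + 1)) (ZMod 2)) i0 kf +
                (g : Matrix (Fin (n + 1)) (Fin (n + 1)) (ZMod 2)) kf kf := by
            rw [key, if_pos hq1, hq1, hq2']
          rw [e1, hpiv, zmod2_eq_one _ hne0']
          exact zmod2_add_self 1
        · refine ⟨fun hqp => hq1 (by rw [hqp]), ?_⟩
          rw [badSet, Finset.mem_filter]
          refine ⟨Finset.mem_univ _, hqc, ?_⟩
          rw [key, if_neg hq1, add_zero] at hqne
          exact hqne
      have hcard' : (badSet n k g').card ≤ c := by
        have hc1 := Finset.card_le_card hsub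
        rw [Finset.card_erase_of_mem hpmem] at hc1
        have hc2 : 0 < (badSet n k g).card := Finset.card_pos.mpr ⟨p, hpmem⟩
        omega
      have hg'H := ihc g' hg'mem hId' hpiv' hcard'
      have hfin : g = (TV (n + 1) i0 kf hneik)⁻¹ * g' := by
        rw [hg'def, inv_mul_cancel_left]
      rw [hfin]
      exact mul_mem (inv_mem ht) hg'H


lemma outer (hlsum : l.sum = n + 1) (hmsum : m.sum = n + 1) :
    ∀ d : ℕ, ∀ g : GL (Fin (n + 1)) (ZMod 2), g ∈ paraPair (n + 1) l m →
      Ident n (n + 1 - d) g → g ∈ Subgroup.closure (genSet n l m) := by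
  intro d
  induction d with
  | zero =>
    intro g hg hId
    have hone : g = 1 := by
      apply Units.ext
      apply Matrix.ext
      intro i j
      rw [hId i j (Or.inl (by omega)), Units.val_one, Matrix.one_apply]
    rw [hone]
    exact one_mem _
  | succ d ih =>
    intro g hg hId
    by_cases hd : d ≤ n
    case neg =>
      exact ih g hg (fun i j hij => absurd hij (by omega))
    case pos =>
    set k := n - d with hkdef
    have hk : k < n + 1 := by omega
    have hkk : n + 1 - (d + 1) = k := by omega
    rw [hkk] at hId
    have hIH : ∀ g' : GL (Fin (n + 1)) (ZMod 2), g' ∈ paraPair (n + 1) l m →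
        Ident n (k + 1) g' → g' ∈ Subgroup.closure (genSet n l m) := by
      intro g' h1 h2
      apply ih g' h1
      have he : n + 1 - d = k + 1 := by omega
      rw [he]
      exact h2
    set kf : Fin (n + 1) := ⟨k, hk⟩ with hkf
    have hkv : (kf : ℕ) = k := rfl
    have hkvl : blockIdx l (kf : ℕ) = blockIdx l k := rfl
    have hkvm : blockIdx m (kf : ℕ) = blockIdx m k := rfl
    by_cases hpiv : (g : Matrix (Fin (n + 1)) (Fin (n + 1)) (ZMod 2)) kf kf = 1
    · exact inner n l m hlsum hmsum k hk hIH (badSet n k g).card g hg hId hpiv le_rfl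
    have hpiv0 : (g : Matrix (Fin (n + 1)) (Fin (n + 1)) (ZMod 2)) kf kf = 0 := zmod2_eq_zero _ hpiv
    have hrow : ∃ j0 : Fin (n + 1), (g : Matrix (Fin (n + 1)) (Fin (n + 1)) (ZMod 2)) kf j0 ≠ 0 := by
      by_contra hc
      push_neg at hc
      have h1 : ((g : Matrix (Fin (n + 1)) (Fin (n + 1)) (ZMod 2)) * ((g⁻¹ : GL (Fin (n + 1)) (ZMod 2)) : Matrix (Fin (n + 1)) (Fin (n + 1)) (ZMod 2))) kf kf =
          (1 : Matrix (Fin (n + 1)) (Fin (n + 1)) (ZMod 2)) kf kf := by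
        rw [← Units.val_mul, mul_inv_cancel, Units.val_one]
      rw [Matrix.mul_apply, Finset.sum_eq_zero (fun x _ => by rw [hc x, zero_mul]),
        Matrix.one_apply_eq] at h1
      exact (by decide : (0 : ZMod 2) ≠ 1) h1
    have hcol : ∃ i0 : Fin (n + 1), (g : Matrix (Fin (n + 1)) (Fin (n + 1)) (ZMod 2)) i0 kf ≠ 0 := by
      by_contra hc
      push_neg at hc
      have h1 : (((g⁻¹ : GL (Fin (n + 1)) (ZMod 2)) : Matrix (Fin (n + 1)) (Fin (n + 1)) (ZMod 2)) * (g : Matrix (Fin (n + 1)) (Fin (n + 1)) (ZMod 2))) kf kf =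
          (1 : Matrix (Fin (n + 1)) (Fin (n + 1)) (ZMod 2)) kf kf := by
        rw [← Units.val_mul, inv_mul_cancel, Units.val_one]
      rw [Matrix.mul_apply, Finset.sum_eq_zero (fun x _ => by rw [hc x, mul_zero]),
        Matrix.one_apply_eq] at h1
      exact (by decide : (0 : ZMod 2) ≠ 1) h1
    obtain ⟨j0, hj0⟩ := hrow
    obtain ⟨i0, hi0⟩ := hcol
    have hj0k : k < (j0 : ℕ) := by
      rcases Nat.lt_trichotomy (j0 : ℕ) k with h | h | h
      · exfalso
        apply hj0
        have hkj : kf ≠ j0 := fun hx => by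
          have := congrArg Fin.val hx; simp only [hkf] at this; omega
        rw [hId kf j0 (Or.inr h), if_neg hkj]
      · exfalso
        have he : j0 = kf := Fin.ext (show (j0 : ℕ) = k from h)
        rw [he] at hj0
        exact hj0 hpiv0
      · exact h
    have hi0k : k < (i0 : ℕ) := by
      rcases Nat.lt_trichotomy (i0 : ℕ) k with h | h | h
      · exfalso
        apply hi0
        have hik : i0 ≠ kf := fun hx => by
          have := congrArg Fin.val hx; simp only [hkf] at this; omega
        rw [hId i0 kf (Or.inl h), if_neg hik]
      · exfalso
        have he : i0 = kf := Fin.ext (show (i0 : ℕ) = k from h)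
        rw [he] at hi0
        exact hi0 hpiv0
      · exact h
    by_cases hA : blockIdx l (j0 : ℕ) = blockIdx l k
    · -- pivot via column operation
      have hnejk : j0 ≠ kf := fun hx => by
        have := congrArg Fin.val hx; simp only [hkf] at this; omega
      have ht : TV (n + 1) j0 kf hnejk ∈ Subgroup.closure (genSet n l m) :=
        gen_lower n l m hlsum ((j0 : ℕ) - k - 1) j0 kf (by omega) hA hnejk
      have htp : TV (n + 1) j0 kf hnejk ∈ paraPair (n + 1) l m :=
        lower_mem n l m _ j0 kf (by omega) hA rfl
      set g' := g * TV (n + 1) j0 kf hnejk with hg'def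
      have key : ∀ a b : Fin (n + 1), (g' : Matrix (Fin (n + 1)) (Fin (n + 1)) (ZMod 2)) a b =
          (g : Matrix (Fin (n + 1)) (Fin (n + 1)) (ZMod 2)) a b + if b = kf then (g : Matrix (Fin (n + 1)) (Fin (n + 1)) (ZMod 2)) a j0 else 0 :=
        fun a b => right_apply j0 kf (g : Matrix (Fin (n + 1)) (Fin (n + 1)) (ZMod 2)) a b
      have hId' : Ident n k g' := by
        intro a b hab
        rw [key]
        rcases hab with ha | hb
        · by_cases hbk : b = kf
          · have haj : a ≠ j0 := fun hx => by
              have := congrArg Fin.val hx; omega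
            rw [if_pos hbk, hId a j0 (Or.inl ha), if_neg haj, add_zero]
            exact hId a b (Or.inl ha)
          · rw [if_neg hbk, add_zero]
            exact hId a b (Or.inl ha)
        · have hbk : b ≠ kf := fun hx => by
            have := congrArg Fin.val hx; simp only [hkf] at this; omega
          rw [if_neg hbk, add_zero]
          exact hId a b (Or.inr hb)
      have hpiv' : (g' : Matrix (Fin (n + 1)) (Fin (n + 1)) (ZMod 2)) kf kf = 1 := by
        rw [key, if_pos rfl, hpiv0, zero_add]
        exact zmod2_eq_one _ hj0
      have hg'mem : g' ∈ paraPair (n + 1) l m := mul_mem hg htp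
      have hg'H := inner n l m hlsum hmsum k hk hIH (badSet n k g').card g'
        hg'mem hId' hpiv' le_rfl
      have hfin : g = g' * (TV (n + 1) j0 kf hnejk)⁻¹ := by
        rw [hg'def, mul_inv_cancel_right]
      rw [hfin]
      exact mul_mem hg'H (inv_mem ht)
    by_cases hB : blockIdx m (i0 : ℕ) = blockIdx m k
    · -- pivot via row operation
      have hneki : kf ≠ i0 := fun hx => by
        have := congrArg Fin.val hx; simp only [hkf] at this; omega
      have ht : TV (n + 1) kf i0 hneki ∈ Subgroup.closure (genSet n l m) :=
        gen_upper n l m hmsum ((i0 : ℕ) - k - 1) kf i0 (by omega) hB.symm hneki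
      have htp : TV (n + 1) kf i0 hneki ∈ paraPair (n + 1) l m :=
        upper_mem n l m _ kf i0 (by omega) hB.symm rfl
      set g' := TV (n + 1) kf i0 hneki * g with hg'def
      have key : ∀ a b : Fin (n + 1), (g' : Matrix (Fin (n + 1)) (Fin (n + 1)) (ZMod 2)) a b =
          (g : Matrix (Fin (n + 1)) (Fin (n + 1)) (ZMod 2)) a b + if a = kf then (g : Matrix (Fin (n + 1)) (Fin (n + 1)) (ZMod 2)) i0 b else 0 :=
        fun a b => left_apply kf i0 (g : Matrix (Fin (n + 1)) (Fin (n + 1)) (ZMod 2)) a b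
      have hId' : Ident n k g' := by
        intro a b hab
        rw [key]
        rcases hab with ha | hb
        · have hak : a ≠ kf := fun hx => by
            have := congrArg Fin.val hx; simp only [hkf] at this; omega
          rw [if_neg hak, add_zero]
          exact hId a b (Or.inl ha)
        · by_cases hak : a = kf
          · have hib : i0 ≠ b := fun hx => by
              have := congrArg Fin.val hx; omega
            rw [if_pos hak, hId i0 b (Or.inr hb), if_neg hib, add_zero]
            exact hId a b (Or.inr hb)
          · rw [if_neg hak, add_zero]
            exact hId a b (Or.inr hb)
      have hpiv' : (g' : Matrix (Fin (n + 1)) (Fin (n + 1)) (ZMod 2)) kf kf = 1 := by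
        rw [key, if_pos rfl, hpiv0, zero_add]
        exact zmod2_eq_one _ hi0
      have hg'mem : g' ∈ paraPair (n + 1) l m := mul_mem htp hg
      have hg'H := inner n l m hlsum hmsum k hk hIH (badSet n k g').card g'
        hg'mem hId' hpiv' le_rfl
      have hfin : g = (TV (n + 1) kf i0 hneki)⁻¹ * g' := by
        rw [hg'def, inv_mul_cancel_left]
      rw [hfin]
      exact mul_mem (inv_mem ht) hg'H
    · exfalso
      have hmono1 := blockIdx_mono l (le_of_lt hj0k)
      have hmono2 := blockIdx_mono m (le_of_lt hi0k)
      have hc1 : blockIdx l (i0 : ℕ) ≤ blockIdx l k := by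
        by_contra hcc
        exact hi0 (hg.1 i0 kf (by omega))
      have hc2 : blockIdx m (j0 : ℕ) ≤ blockIdx m k := by
        by_contra hcc
        exact hj0 (hg.2 kf j0 (by omega))
      have hij1 : (i0 : ℕ) < (j0 : ℕ) := lt_of_blockIdx_lt l (by omega)
      have hij2 : (j0 : ℕ) < (i0 : ℕ) := lt_of_blockIdx_lt m (by omega)
      omega

end Stmt16

open Stmt16

theorem stmt16 (n : ℕ) (l m : List ℕ) (hl : ∀ x ∈ l, 0 < x) (hm : ∀ x ∈ m, 0 < x)
    (hlsum : l.sum = n + 1) (hmsum : m.sum = n + 1) :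
    paraPair (n + 1) l m = Subgroup.closure {u : GL (Fin (n + 1)) (ZMod 2) |
      ∃ j : Fin n,
        (((j : ℕ) + 1) ∉ stopovers l ∧
          (u : Matrix (Fin (n + 1)) (Fin (n + 1)) (ZMod 2)) = xM n j) ∨
        (((j : ℕ) + 1) ∉ stopovers m ∧
          (u : Matrix (Fin (n + 1)) (Fin (n + 1)) (ZMod 2)) = yM n j)} := by
  have hset : {u : GL (Fin (n + 1)) (ZMod 2) |
      ∃ j : Fin n,
        (((j : ℕ) + 1) ∉ stopovers l ∧
          (u : Matrix (Fin (n + 1)) (Fin (n + 1)) (ZMod 2)) = xM n j) ∨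
        (((j : ℕ) + 1) ∉ stopovers m ∧
          (u : Matrix (Fin (n + 1)) (Fin (n + 1)) (ZMod 2)) = yM n j)} = genSet n l m := rfl
  rw [hset]
  apply le_antisymm
  · intro g hg
    exact outer n l m hlsum hmsum (n + 1) g hg (fun i j hij => absurd hij (by omega))
  · rw [Subgroup.closure_le]
    rintro u ⟨j, ⟨hst, hval⟩ | ⟨hst, hval⟩⟩
    · refine lower_mem n l m u j.succ j.castSucc
        (by rw [Fin.val_succ, Fin.coe_castSucc]; omega) ?_ hval
      have h2 := (blockIdx_eq_succ_iff l n hlsum (j : ℕ) j.isLt).mpr hst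
      rw [Fin.val_succ, Fin.coe_castSucc]
      exact h2.symm
    · refine upper_mem n l m u j.castSucc j.succ
        (by rw [Fin.val_succ, Fin.coe_castSucc]; omega) ?_ hval
      have h2 := (blockIdx_eq_succ_iff m n hmsum (j : ℕ) j.isLt).mpr hst
      rw [Fin.val_succ, Fin.coe_castSucc]
      exact h2
end

section
/- If the compositions λ and μ of n both have last part equal to 1 (λ_l = μ_m = 1), then |P_{λ|μ}| = |P_{λ̃|μ̃}|, where λ̃ and μ̃ are obtained by deleting the last parts. -/
open Matrix

open Matrix

lemma take_sum_le (L : List ℕ) (k : ℕ) : (L.take k).sum ≤ L.sum := by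
  conv_rhs => rw [← List.take_append_drop k L]
  rw [List.sum_append]; omega

lemma blockIdx_lt_length_s17 (L : List ℕ) (i : ℕ) (hi : i < L.sum) :
    blockIdx L i < L.length := by
  have hlen : 0 < L.length := by
    rcases L with _ | ⟨a, L⟩
    · simp at hi
    · simp
  by_contra h
  push_neg at h
  have hle : blockIdx L i ≤ L.length := by
    unfold blockIdx
    calc _ ≤ (List.range L.length).length := List.countP_le_length
    _ = L.length := List.length_range
  have heq : blockIdx L i = L.length := le_antisymm hle h
  unfold blockIdx at heq
  have heq' : List.countP (fun k => decide ((List.take (k + 1) L).sum ≤ i)) (List.range L.length) = (List.range L.length).length := by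
    rw [List.length_range]; exact heq
  have hall := (List.countP_eq_length).mp heq'
  have hk : L.length - 1 ∈ List.range L.length := by
    simp; omega
  have h2 := hall _ hk
  simp only [decide_eq_true_eq] at h2
  have hsub : L.length - 1 + 1 = L.length := by omega
  rw [hsub, List.take_length] at h2
  omega

lemma blockIdx_append_one (L : List ℕ) (i : ℕ) (hi : i < L.sum) :
    blockIdx (L ++ [1]) i = blockIdx L i := by
  unfold blockIdx
  rw [List.length_append, List.length_singleton, List.range_succ, List.countP_append]
  have h1 : List.countP (fun k => decide (((L ++ [1]).take (k + 1)).sum ≤ i)) [L.length] = 0 := by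
    simp [List.countP_cons, List.take_append_of_le_length, List.sum_append]
    omega
  rw [h1, Nat.add_zero]
  apply List.countP_congr
  intro k hk
  rw [List.mem_range] at hk
  rw [List.take_append_of_le_length (by omega)]

lemma blockIdx_append_one_last (L : List ℕ) :
    blockIdx (L ++ [1]) L.sum = L.length := by
  unfold blockIdx
  rw [List.length_append, List.length_singleton, List.range_succ, List.countP_append]
  have h1 : List.countP (fun k => decide (((L ++ [1]).take (k + 1)).sum ≤ L.sum)) [L.length] = 0 := by
    simp [List.countP_cons, List.sum_append]
  rw [h1, Nat.add_zero]
  have : List.countP (fun k => decide (((L ++ [1]).take (k + 1)).sum ≤ L.sum)) (List.range L.length) = (List.range L.length).length := by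
    rw [List.countP_eq_length]
    intro k hk
    rw [List.mem_range] at hk
    simp only [decide_eq_true_eq]
    rw [List.take_append_of_le_length (by omega)]
    exact take_sum_le L (k+1)
  rw [this, List.length_range]

def extM {n : ℕ} (B : Matrix (Fin n) (Fin n) (ZMod 2)) :
    Matrix (Fin (n+1)) (Fin (n+1)) (ZMod 2) :=
  Matrix.of fun i j =>
    if hi : i = Fin.last n then (if j = Fin.last n then 1 else 0)
    else if hj : j = Fin.last n then 0 else B (i.castPred hi) (j.castPred hj)

@[simp] lemma extM_cc {n : ℕ} (B : Matrix (Fin n) (Fin n) (ZMod 2)) (i j : Fin n) :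
    extM B i.castSucc j.castSucc = B i j := by
  simp [extM, (Fin.castSucc_lt_last _).ne]

@[simp] lemma extM_cl {n : ℕ} (B : Matrix (Fin n) (Fin n) (ZMod 2)) (i : Fin n) :
    extM B i.castSucc (Fin.last n) = 0 := by
  simp [extM, (Fin.castSucc_lt_last _).ne]

@[simp] lemma extM_lc {n : ℕ} (B : Matrix (Fin n) (Fin n) (ZMod 2)) (j : Fin n) :
    extM B (Fin.last n) j.castSucc = 0 := by
  simp [extM, (Fin.castSucc_lt_last _).ne]

@[simp] lemma extM_ll {n : ℕ} (B : Matrix (Fin n) (Fin n) (ZMod 2)) :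
    extM B (Fin.last n) (Fin.last n) = 1 := by
  simp [extM]

lemma extM_mul {n : ℕ} (B C : Matrix (Fin n) (Fin n) (ZMod 2)) :
    extM B * extM C = extM (B * C) := by
  ext i j
  rw [Matrix.mul_apply, Fin.sum_univ_castSucc]
  induction i using Fin.lastCases with
  | last =>
    induction j using Fin.lastCases with
    | last => simp
    | cast j => simp
  | cast i =>
    induction j using Fin.lastCases with
    | last => simp
    | cast j => simp [Matrix.mul_apply]

lemma extM_one {n : ℕ} : extM (1 : Matrix (Fin n) (Fin n) (ZMod 2)) = 1 := by
  ext i j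
  induction i using Fin.lastCases with
  | last =>
    induction j using Fin.lastCases with
    | last => simp
    | cast j => simp [Matrix.one_apply, (Fin.castSucc_lt_last j).ne']
  | cast i =>
    induction j using Fin.lastCases with
    | last => simp [Matrix.one_apply, (Fin.castSucc_lt_last i).ne]
    | cast j => simp [Matrix.one_apply, Fin.castSucc_inj]

lemma sub_mul_sub {n : ℕ} (A B : Matrix (Fin (n+1)) (Fin (n+1)) (ZMod 2))
    (hA : ∀ i : Fin n, A i.castSucc (Fin.last n) = 0) :
    (A.submatrix Fin.castSucc Fin.castSucc) * (B.submatrix Fin.castSucc Fin.castSucc)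
      = (A*B).submatrix Fin.castSucc Fin.castSucc := by
  ext i j
  simp only [Matrix.mul_apply, Matrix.submatrix_apply]
  rw [Fin.sum_univ_castSucc, hA, zero_mul, add_zero]

lemma one_sub {n : ℕ} : (1 : Matrix (Fin (n+1)) (Fin (n+1)) (ZMod 2)).submatrix
    (Fin.castSucc) (Fin.castSucc) = (1 : Matrix (Fin n) (Fin n) (ZMod 2)) := by
  ext i j
  simp [Matrix.one_apply, Fin.castSucc_inj]

lemma zmod2_mul_one {a b : ZMod 2} (h : a * b = 1) : a = 1 := by
  revert h; revert a b; decide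

lemma key_s17 (n : ℕ) (L M : List ℕ) (hLs : L.sum = n) (hMs : M.sum = n) :
    Nat.card (paraPair (n+1) (L++[1]) (M++[1])) = Nat.card (paraPair n L M) := by
  -- basic blockIdx facts in dimension n+1
  have hbL : ∀ k : Fin n, blockIdx (L++[1]) (k.castSucc : Fin (n+1)).val = blockIdx L k.val := by
    intro k
    rw [Fin.coe_castSucc]
    exact blockIdx_append_one L k.val (by omega)
  have hbLlast : blockIdx (L++[1]) ((Fin.last n : Fin (n+1)).val) = L.length := by
    rw [Fin.val_last, ← hLs]
    exact blockIdx_append_one_last L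
  have hbM : ∀ k : Fin n, blockIdx (M++[1]) (k.castSucc : Fin (n+1)).val = blockIdx M k.val := by
    intro k
    rw [Fin.coe_castSucc]
    exact blockIdx_append_one M k.val (by omega)
  have hbMlast : blockIdx (M++[1]) ((Fin.last n : Fin (n+1)).val) = M.length := by
    rw [Fin.val_last, ← hMs]
    exact blockIdx_append_one_last M
  -- zero row / column facts
  have row0 : ∀ g ∈ paraPair (n+1) (L++[1]) (M++[1]), ∀ k : Fin n,
      (g : Matrix (Fin (n+1)) (Fin (n+1)) (ZMod 2)) (Fin.last n) k.castSucc = 0 := by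
    intro g hg k
    apply hg.1
    rw [hbL k, hbLlast]
    exact blockIdx_lt_length_s17 L k.val (by omega)
  have col0 : ∀ g ∈ paraPair (n+1) (L++[1]) (M++[1]), ∀ k : Fin n,
      (g : Matrix (Fin (n+1)) (Fin (n+1)) (ZMod 2)) k.castSucc (Fin.last n) = 0 := by
    intro g hg k
    apply hg.2
    rw [hbM k, hbMlast]
    exact blockIdx_lt_length_s17 M k.val (by omega)
  -- last diagonal entry is 1
  have last1 : ∀ g ∈ paraPair (n+1) (L++[1]) (M++[1]),
      (g : Matrix (Fin (n+1)) (Fin (n+1)) (ZMod 2)) (Fin.last n) (Fin.last n) = 1 := by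
    intro g hg
    have h1 : ((g : Matrix (Fin (n+1)) (Fin (n+1)) (ZMod 2)) *
        ((g⁻¹ : GL (Fin (n+1)) (ZMod 2)) : Matrix (Fin (n+1)) (Fin (n+1)) (ZMod 2)))
        (Fin.last n) (Fin.last n) = 1 := by
      rw [← Units.val_mul, mul_inv_cancel, Units.val_one, Matrix.one_apply_eq]
    rw [Matrix.mul_apply, Fin.sum_univ_castSucc] at h1
    have h2 : ∀ k : Fin n, (g : Matrix (Fin (n+1)) (Fin (n+1)) (ZMod 2)) (Fin.last n) k.castSucc *
        ((g⁻¹ : GL (Fin (n+1)) (ZMod 2)) : Matrix (Fin (n+1)) (Fin (n+1)) (ZMod 2)) k.castSucc (Fin.last n) = 0 := by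
      intro k; rw [row0 g hg k, zero_mul]
    rw [Finset.sum_eq_zero (fun k _ => h2 k), zero_add] at h1
    exact zmod2_mul_one h1
  -- the map
  let Φ : paraPair (n+1) (L++[1]) (M++[1]) → paraPair n L M := fun g =>
    ⟨⟨((g : GL (Fin (n+1)) (ZMod 2)) : Matrix (Fin (n+1)) (Fin (n+1)) (ZMod 2)).submatrix Fin.castSucc Fin.castSucc,
      (((g : GL (Fin (n+1)) (ZMod 2))⁻¹ : GL (Fin (n+1)) (ZMod 2)) : Matrix (Fin (n+1)) (Fin (n+1)) (ZMod 2)).submatrix Fin.castSucc Fin.castSucc,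
      by
        rw [sub_mul_sub _ _ (col0 _ g.2), ← Units.val_mul, mul_inv_cancel, Units.val_one, one_sub],
      by
        rw [sub_mul_sub _ _ (col0 _ ((paraPair (n+1) (L++[1]) (M++[1])).inv_mem g.2)),
          ← Units.val_mul, inv_mul_cancel, Units.val_one, one_sub]⟩,
      by
        constructor
        · intro i j h
          exact g.2.1 i.castSucc j.castSucc (by rw [hbL i, hbL j]; exact h)
        · intro i j h
          exact g.2.2 i.castSucc j.castSucc (by rw [hbM i, hbM j]; exact h)⟩
  apply Nat.card_eq_of_bijective Φ
  constructor
  · -- injective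
    intro g h heq
    have heq' : ((g : GL (Fin (n+1)) (ZMod 2)) : Matrix (Fin (n+1)) (Fin (n+1)) (ZMod 2)).submatrix Fin.castSucc Fin.castSucc
        = ((h : GL (Fin (n+1)) (ZMod 2)) : Matrix (Fin (n+1)) (Fin (n+1)) (ZMod 2)).submatrix Fin.castSucc Fin.castSucc :=
      congrArg (fun x => ((x : paraPair n L M) : GL (Fin n) (ZMod 2)).val) heq
    apply Subtype.ext
    apply Units.ext
    ext i j
    induction i using Fin.lastCases with
    | last =>
      induction j using Fin.lastCases with
      | last => rw [last1 _ g.2, last1 _ h.2]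
      | cast j => rw [row0 _ g.2, row0 _ h.2]
    | cast i =>
      induction j using Fin.lastCases with
      | last => rw [col0 _ g.2, col0 _ h.2]
      | cast j =>
        have := congrFun (congrFun heq' i) j
        simpa using this
  · -- surjective
    rintro ⟨g', hg'⟩
    refine ⟨⟨⟨extM (g' : Matrix (Fin n) (Fin n) (ZMod 2)),
      extM (((g'⁻¹ : GL (Fin n) (ZMod 2))) : Matrix (Fin n) (Fin n) (ZMod 2)), ?_, ?_⟩, ?_⟩, ?_⟩
    · rw [extM_mul, ← Units.val_mul, mul_inv_cancel, Units.val_one, extM_one]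
    · rw [extM_mul, ← Units.val_mul, inv_mul_cancel, Units.val_one, extM_one]
    · constructor
      · intro i j h
        induction i using Fin.lastCases with
        | last =>
          induction j using Fin.lastCases with
          | last => exact absurd h (lt_irrefl _)
          | cast j => exact extM_lc _ j
        | cast i =>
          induction j using Fin.lastCases with
          | last => exact extM_cl _ i
          | cast j =>
            rw [hbL i, hbL j] at h
            show extM _ i.castSucc j.castSucc = 0
            rw [extM_cc]
            exact hg'.1 i j h
      · intro i j h
        induction i using Fin.lastCases with
        | last =>
          induction j using Fin.lastCases with
          | last => exact absurd h (lt_irrefl _)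
          | cast j => exact extM_lc _ j
        | cast i =>
          induction j using Fin.lastCases with
          | last => exact extM_cl _ i
          | cast j =>
            rw [hbM i, hbM j] at h
            show extM _ i.castSucc j.castSucc = 0
            rw [extM_cc]
            exact hg'.2 i j h
    · apply Subtype.ext
      apply Units.ext
      ext i j
      show (extM ((g' : Matrix (Fin n) (Fin n) (ZMod 2)))).submatrix Fin.castSucc Fin.castSucc i j
        = (g' : Matrix (Fin n) (Fin n) (ZMod 2)) i j
      rw [Matrix.submatrix_apply, extM_cc]

theorem stmt17 (n : ℕ) (L M : List ℕ)
    (hL : ∀ x ∈ L ++ [1], 0 < x) (hM : ∀ x ∈ M ++ [1], 0 < x)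
    (hLsum : (L ++ [1]).sum = n) (hMsum : (M ++ [1]).sum = n) :
    Nat.card (paraPair n (L ++ [1]) (M ++ [1])) = Nat.card (paraPair (n - 1) L M) := by
  rw [List.sum_append, List.sum_singleton] at hLsum hMsum
  subst hLsum
  have h1 : L.sum + 1 - 1 = L.sum := by omega
  rw [h1]
  exact key_s17 L.sum L M rfl (by omega)
end
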